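/- arXiv:2105.10667 — 4 statements merged into one kernel-verified Lean document; each statement's English description precedes it below -/
import Mathlib

section
/- Let f : ℝ → ℝ be continuous and 1-periodic with [f] := ∫₀¹ f(t) dt > 0, let F(t) := ∫₀^t f(τ) dτ and k₀ := max_{s∈[0,2]} |F(s)|. Then for all real numbers s < t: (1) F(s) − F(t) ≤ 2k₀ − (t − s − 1)·[f]; (2) ∫_s^t e^{F(τ)−F(t)} dτ ≤ (e^{2k₀+[f]}/[f])·(1 − e^{−(t−s)[f]}); (3) ∫_{−∞}^t e^{F(τ)−F(t)} dτ ≤ e^{2k₀+[f]}/[f]. -/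
open MeasureTheory Real Filter

noncomputable section

/-- Basic exponential estimates for a time-periodic damping
coefficient with positive mean. Here `m = [f] = ∫₀¹ f`, `F t = ∫₀ᵗ f`, and
`k₀ = max_{s ∈ [0,2]} |F s|`. -/
theorem damping_exponential_estimates
    (f F : ℝ → ℝ) (m k₀ : ℝ)
    (hf : Continuous f) (hfper : ∀ t, f (t + 1) = f t)
    (hm : m = ∫ t in (0:ℝ)..1, f t) (hmpos : 0 < m)
    (hF : ∀ t, F t = ∫ τ in (0:ℝ)..t, f τ)
    (hk₀ : IsGreatest ((fun s => |F s|) '' Set.Icc (0:ℝ) 2) k₀) :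
    ∀ s t : ℝ, s < t →
      (F s - F t ≤ 2 * k₀ - (t - s - 1) * m) ∧
      ((∫ τ in s..t, Real.exp (F τ - F t)) ≤
        Real.exp (2 * k₀ + m) / m * (1 - Real.exp (-(t - s) * m))) ∧
      ((∫ τ in Set.Iic t, Real.exp (F τ - F t)) ≤ Real.exp (2 * k₀ + m) / m) := by
  have hFc : Continuous F := by
    have h := intervalIntegral.continuous_primitive
      (fun a b => hf.intervalIntegrable (μ := volume) a b) 0
    have : F = fun t => ∫ τ in (0:ℝ)..t, f τ := funext hF
    rw [this]; exact h
  have hF0 : F 0 = 0 := by rw [hF]; simp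
  have habs : ∀ x ∈ Set.Icc (0:ℝ) 2, |F x| ≤ k₀ := fun x hx => hk₀.2 ⟨x, hx, rfl⟩
  have hk0 : 0 ≤ k₀ := by
    have := habs 0 (by norm_num)
    rw [hF0] at this; simpa using this
  have hfP : Function.Periodic f 1 := hfper
  -- F (x + 1) = F x + m
  have hFadd : ∀ x, F (x + 1) = F x + m := by
    intro x
    rw [hF, hF, hm]
    rw [← intervalIntegral.integral_add_adjacent_intervals
      (hf.intervalIntegrable 0 x) (hf.intervalIntegrable x (x + 1))]
    congr 1
    simpa using hfP.intervalIntegral_add_eq x 0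
  -- F (x + k) = F x + k * m for integers k
  have hGper : Function.Periodic (fun x => F x - m * x) 1 := by
    intro x
    simp only [hFadd x]; ring
  have hFint : ∀ (k : ℤ) (x : ℝ), F (x + k) = F x + k * m := by
    intro k x
    have := (hGper.int_mul k) x
    simp only [mul_one] at this
    linarith [this]
  -- Part (1)
  have key : ∀ s t : ℝ, s < t → F s - F t ≤ 2 * k₀ - (t - s - 1) * m := by
    intro s t hst
    set n : ℤ := ⌊t - s⌋ with hn
    have hn0 : (0:ℝ) ≤ n := by
      have : (0:ℤ) ≤ n := Int.le_floor.2 (by simpa using hst.le)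
      exact_mod_cast this
    have hnle : (n:ℝ) ≤ t - s := Int.floor_le _
    have hnlt : t - s < n + 1 := Int.lt_floor_add_one _
    set σ : ℝ := Int.fract s with hσ
    set θ : ℝ := t - s - n with hθ
    have hσ0 : 0 ≤ σ := Int.fract_nonneg s
    have hσ1 : σ < 1 := Int.fract_lt_one s
    have hθ0 : 0 ≤ θ := by simp [hθ]; linarith
    have hθ1 : θ < 1 := by simp [hθ]; linarith
    have h1 : F t = F (s + θ) + n * m := by
      have := hFint n (s + θ)
      have ht : s + θ + n = t := by simp [hθ]; ring
      rw [ht] at this; exact this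
    have h2 : F (s + θ) = F (σ + θ) + (⌊s⌋ : ℝ) * m := by
      have := hFint ⌊s⌋ (σ + θ)
      have hs : σ + θ + (⌊s⌋ : ℝ) = s + θ := by
        have := Int.fract_add_floor s; rw [hσ]; linarith
      rw [hs] at this; exact this
    have h3 : F s = F σ + (⌊s⌋ : ℝ) * m := by
      have := hFint ⌊s⌋ σ
      have hs : σ + (⌊s⌋ : ℝ) = s := by rw [hσ]; exact Int.fract_add_floor s
      rw [hs] at this; exact this
    have hb1 : |F σ| ≤ k₀ := habs σ ⟨hσ0, by linarith⟩
    have hb2 : |F (σ + θ)| ≤ k₀ := habs (σ + θ) ⟨by linarith, by linarith⟩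
    have hmn : (t - s - 1) * m ≤ (n:ℝ) * m := by
      apply mul_le_mul_of_nonneg_right _ hmpos.le
      linarith
    have ha1 := abs_le.1 hb1
    have ha2 := abs_le.1 hb2
    have : F s - F t = F σ - F (σ + θ) - n * m := by
      rw [h1, h2, h3]; ring
    linarith [this, ha1.2, ha2.1]
  -- pointwise exponential bound
  have ptw : ∀ t τ : ℝ, τ ≤ t →
      Real.exp (F τ - F t) ≤ Real.exp (2 * k₀ + m) * Real.exp ((τ - t) * m) := by
    intro t τ hτ
    rw [← Real.exp_add]
    apply Real.exp_le_exp.2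
    rcases eq_or_lt_of_le hτ with h | h
    · subst h; nlinarith
    · have := key τ t h; nlinarith
  -- the explicit integral
  have hderiv : ∀ t τ : ℝ, HasDerivAt (fun τ => Real.exp ((τ - t) * m) / m)
      (Real.exp ((τ - t) * m)) τ := by
    intro t τ
    have h1 : HasDerivAt (fun τ : ℝ => (τ - t) * m) m τ := by
      simpa using ((hasDerivAt_id τ).sub_const t).mul_const m
    have h2 := (h1.exp).div_const m
    simpa [mul_div_assoc, mul_div_cancel_right₀ _ hmpos.ne'] using h2
  have hcalc : ∀ s t : ℝ, (∫ τ in s..t, Real.exp ((τ - t) * m)) =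
      (1 - Real.exp (-(t - s) * m)) / m := by
    intro s t
    rw [intervalIntegral.integral_eq_sub_of_hasDerivAt (fun τ _ => hderiv t τ)
      ((Continuous.rexp (by continuity)).intervalIntegrable s t)]
    have h1 : (s - t) * m = -(t - s) * m := by ring
    have h2 : (t - t) * m = 0 := by ring
    rw [h1, h2, Real.exp_zero]
    ring
  -- Part (2)
  have part2 : ∀ s t : ℝ, s < t →
      (∫ τ in s..t, Real.exp (F τ - F t)) ≤
        Real.exp (2 * k₀ + m) / m * (1 - Real.exp (-(t - s) * m)) := by
    intro s t hst
    have hg_cont : Continuous (fun τ => Real.exp (F τ - F t)) :=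
      (hFc.sub continuous_const).rexp
    calc (∫ τ in s..t, Real.exp (F τ - F t))
        ≤ ∫ τ in s..t, Real.exp (2 * k₀ + m) * Real.exp ((τ - t) * m) := by
          apply intervalIntegral.integral_mono_on hst.le
            (hg_cont.intervalIntegrable s t)
            ((continuous_const.mul (Continuous.rexp (by continuity))).intervalIntegrable s t)
          exact fun τ hτ => ptw t τ hτ.2
      _ = Real.exp (2 * k₀ + m) / m * (1 - Real.exp (-(t - s) * m)) := by
          rw [intervalIntegral.integral_const_mul, hcalc]; ring
  -- Part (3)
  have part3 : ∀ t : ℝ,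
      (∫ τ in Set.Iic t, Real.exp (F τ - F t)) ≤ Real.exp (2 * k₀ + m) / m := by
    intro t
    have hg_cont : Continuous (fun τ => Real.exp (F τ - F t)) :=
      (hFc.sub continuous_const).rexp
    have hCpos : 0 < Real.exp (2 * k₀ + m) / m := div_pos (Real.exp_pos _) hmpos
    have hbound : ∀ y : ℝ, y < t →
        (∫ τ in y..t, Real.exp (F τ - F t)) ≤ Real.exp (2 * k₀ + m) / m := by
      intro y hy
      refine le_trans (part2 y t hy) ?_
      nlinarith [Real.exp_pos (-(t - y) * m)]
    have hIntOn : IntegrableOn (fun τ => Real.exp (F τ - F t)) (Set.Iic t) := by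
      apply integrableOn_Iic_of_intervalIntegral_norm_bounded
        (Real.exp (2 * k₀ + m) / m) t
        (fun y : ℝ => (hg_cont.intervalIntegrable y t).1) (tendsto_id (α := ℝ))
      filter_upwards [eventually_lt_atBot t] with y hy
      simp only [id, Real.norm_eq_abs, Real.abs_exp]
      exact hbound y hy
    refine le_of_tendsto (intervalIntegral_tendsto_integral_Iic t hIntOn
      (tendsto_id (α := ℝ))) ?_
    filter_upwards [eventually_lt_atBot t] with y hy
    exact hbound y hy
  intro s t hst
  exact ⟨key s t hst, part2 s t hst, part3 t⟩
end
end

section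
/- For every α ∈ ℝ and every (x,t) ∈ ℝⁿ × ℝ, the weak KAM solution u_α⁻(x,t) is a finite real number and satisfies −|C(0) − α| · e^{2k₀+[f]}/[f] ≤ u_α⁻(x,t) ≤ |C₀ + α| · e^{2k₀+[f]}/[f], where C(0) is the superlinearity constant at k = 0 (so that L(x,v,t) ≥ −C(0) for all (x,v,t)) and C₀ := sup_{(x,t)} L(x,0,t). -/
open MeasureTheory Real Filter
open scoped RealInnerProductSpace

noncomputable section

/-- `ℝⁿ` with the Euclidean norm. -/
abbrev Evec (n : ℕ) : Type := EuclideanSpace ℝ (Fin n)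

/-- The vector of `Evec n` with integer coordinates `k`. -/
def intVec {n : ℕ} (k : Fin n → ℤ) : Evec n := WithLp.toLp 2 (fun i => (k i : ℝ))

/-- `γ` is absolutely continuous on the interval `S` with derivative `γ'`:
on any subinterval of `S` it is the indefinite integral of the locally
integrable function `γ'`. -/
def ACOn {n : ℕ} (γ γ' : ℝ → Evec n) (S : Set ℝ) : Prop :=
  ∀ a ∈ S, ∀ b ∈ S,
    IntervalIntegrable γ' MeasureTheory.volume a b ∧ γ b = γ a + ∫ τ in a..b, γ' τ

/-- The set of (finite) actions `∫_{-∞}^t e^{F(s)-F(t)} (L + α)` of admissible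
absolutely continuous curves `γ : (-∞, t] → ℝⁿ` with `γ t = x`. -/
def wkSet {n : ℕ} (F : ℝ → ℝ) (L : Evec n → Evec n → ℝ → ℝ) (α : ℝ)
    (x : Evec n) (t : ℝ) : Set ℝ :=
  { r | ∃ γ γ' : ℝ → Evec n, ACOn γ γ' (Set.Iic t) ∧ γ t = x ∧
      MeasureTheory.IntegrableOn
        (fun s => Real.exp (F s - F t) * (L (γ s) (γ' s) s + α)) (Set.Iic t) ∧
      r = ∫ s in Set.Iic t, Real.exp (F s - F t) * (L (γ s) (γ' s) s + α) }

/-- The weak KAM solution `u_α⁻(x,t)`. -/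
def uWK {n : ℕ} (F : ℝ → ℝ) (L : Evec n → Evec n → ℝ → ℝ) (α : ℝ)
    (x : Evec n) (t : ℝ) : ℝ :=
  sInf (wkSet F L α x t)

lemma expker_hasDeriv {m : ℝ} (hm : 0 < m) (t s : ℝ) :
    HasDerivAt (fun s => Real.exp (m * (s - t)) / m) (Real.exp (m * (s - t))) s := by
  have h1 : HasDerivAt (fun s : ℝ => m * (s - t)) m s := by
    simpa using ((hasDerivAt_id s).sub_const t).const_mul m
  have := h1.exp.div_const m
  simpa [mul_comm, mul_div_assoc, mul_div_cancel_left₀ _ hm.ne'] using this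

lemma expker_integrableOn {m : ℝ} (hm : 0 < m) (t : ℝ) :
    IntegrableOn (fun s => Real.exp (m * (s - t))) (Set.Iic t) := by
  refine integrableOn_Iic_of_intervalIntegral_norm_bounded (l := atBot) (a := id)
    (1 / m) t (fun y => ?_) tendsto_id ?_
  · exact ((Real.continuous_exp.comp (by continuity)).integrableOn_Ioc)
  · filter_upwards [eventually_le_atBot t] with y hy
    have hcalc : (∫ s in y..t, ‖Real.exp (m * (s - t))‖) =
        Real.exp (m * (t - t)) / m - Real.exp (m * (y - t)) / m := by
      simp_rw [Real.norm_eq_abs, abs_of_pos (Real.exp_pos _)]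
      exact intervalIntegral.integral_eq_sub_of_hasDerivAt
        (fun s _ => expker_hasDeriv hm t s)
        ((Real.continuous_exp.comp (by continuity)).intervalIntegrable y t)
    rw [id, hcalc]
    simp only [sub_self, mul_zero, Real.exp_zero]
    have : 0 ≤ Real.exp (m * (y - t)) / m := by positivity
    linarith

lemma expker_integral {m : ℝ} (hm : 0 < m) (t : ℝ) :
    (∫ s in Set.Iic t, Real.exp (m * (s - t))) = 1 / m := by
  have hlim : Tendsto (fun s => Real.exp (m * (s - t)) / m) atBot (nhds 0) := by
    have h1 : Tendsto (fun s : ℝ => m * (s - t)) atBot atBot :=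
      (tendsto_atBot_add_const_right atBot (-t) tendsto_id).const_mul_atBot hm
    have := (Real.tendsto_exp_atBot.comp h1).div_const m
    simpa using this
  have := integral_Iic_of_hasDerivAt_of_tendsto' (a := t)
    (fun s _ => expker_hasDeriv hm t s) (expker_integrableOn hm t) hlim
  rw [this]; simp

lemma F_shift_bound (f F : ℝ → ℝ) (m k₀ : ℝ)
    (hf : Continuous f) (hfper : ∀ t, f (t + 1) = f t)
    (hm : m = ∫ t in (0:ℝ)..1, f t) (hmpos : 0 < m)
    (hF : ∀ t, F t = ∫ τ in (0:ℝ)..t, f τ)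
    (hk₀ : IsGreatest ((fun s => |F s|) '' Set.Icc (0:ℝ) 2) k₀) :
    ∀ s t : ℝ, F s - F t ≤ 2 * k₀ + m + m * (s - t) := by
  have hper : Function.Periodic f 1 := hfper
  have hFadd : ∀ u : ℝ, F (u + 1) = F u + m := by
    intro u
    have h1 : (∫ τ in (0:ℝ)..u, f τ) + ∫ τ in u..(u+1), f τ = ∫ τ in (0:ℝ)..(u+1), f τ :=
      intervalIntegral.integral_add_adjacent_intervals
        (hf.intervalIntegrable _ _) (hf.intervalIntegrable _ _)
    have h2 : (∫ τ in u..(u+1), f τ) = ∫ τ in (0:ℝ)..(0+1), f τ :=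
      hper.intervalIntegral_add_eq u 0
    rw [hF, hF, hm, ← h1, h2]
    norm_num
  set G : ℝ → ℝ := fun u => F u - m * u with hG
  have hGper : Function.Periodic G 1 := by
    intro u; simp only [hG, hFadd]; ring
  have hGbound : ∀ u : ℝ, -k₀ - m ≤ G u ∧ G u ≤ k₀ := by
    intro u
    have hfr : G u = G (Int.fract u) := by
      have := hGper.sub_int_mul_eq (x := u) ⌊u⌋
      rw [Int.fract]
      simpa using this.symm
    have hmem : Int.fract u ∈ Set.Icc (0:ℝ) 2 :=
      ⟨Int.fract_nonneg u, by have := Int.fract_lt_one u; linarith⟩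
    have habs : |F (Int.fract u)| ≤ k₀ := hk₀.2 ⟨Int.fract u, hmem, rfl⟩
    rw [abs_le] at habs
    have h0 : 0 ≤ m * Int.fract u := mul_nonneg hmpos.le (Int.fract_nonneg u)
    have h1 : m * Int.fract u ≤ m :=
      (mul_le_of_le_one_right hmpos.le (Int.fract_lt_one u).le)
    constructor
    · rw [hfr]; simp only [hG]; linarith [habs.1]
    · rw [hfr]; simp only [hG]; linarith [habs.2]
  intro s t
  have hs := hGbound s
  have ht := hGbound t
  have : F s - F t = (G s - G t) + m * (s - t) := by simp only [hG]; ring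
  linarith [hs.2, ht.1]

/-- The weak KAM solution `u_α⁻` is well defined (the set of
actions is nonempty and bounded below) and satisfies the explicit bounds
`-|C(0) - α| e^{2k₀+[f]}/[f] ≤ u_α⁻ ≤ |C₀ + α| e^{2k₀+[f]}/[f]`. -/
theorem weak_kam_well_defined_and_bounded
    (n : ℕ) (hn : 1 ≤ n)
    (f F : ℝ → ℝ) (m k₀ : ℝ)
    (hf : Continuous f) (hfper : ∀ t, f (t + 1) = f t)
    (hm : m = ∫ t in (0:ℝ)..1, f t) (hmpos : 0 < m)
    (hF : ∀ t, F t = ∫ τ in (0:ℝ)..t, f τ)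
    (hk₀ : IsGreatest ((fun s => |F s|) '' Set.Icc (0:ℝ) 2) k₀)
    (L : Evec n → Evec n → ℝ → ℝ)
    (hLsm : ContDiff ℝ 2 (fun q : Evec n × Evec n × ℝ => L q.1 q.2.1 q.2.2))
    (hLxper : ∀ (k : Fin n → ℤ) (x v : Evec n) (t : ℝ), L (x + intVec k) v t = L x v t)
    (hLtper : ∀ (x v : Evec n) (t : ℝ), L x v (t + 1) = L x v t)
    (hLconv : ∀ (x : Evec n) (t : ℝ) (v w : Evec n), w ≠ 0 →
      0 < iteratedFDeriv ℝ 2 (fun v' => L x v' t) v ![w, w])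
    (hLsuper : ∀ k : ℝ, 0 ≤ k → ∃ C : ℝ, ∀ x v t, k * ‖v‖ - C ≤ L x v t)
    (α C0 Csup : ℝ)
    (hC0 : ∀ x v t, -C0 ≤ L x v t)
    (hCsup : ∀ x t, L x 0 t ≤ Csup) :
    ∀ (x : Evec n) (t : ℝ),
      (wkSet F L α x t).Nonempty ∧ BddBelow (wkSet F L α x t) ∧
      -|C0 - α| * (Real.exp (2 * k₀ + m) / m) ≤ uWK F L α x t ∧
      uWK F L α x t ≤ |Csup + α| * (Real.exp (2 * k₀ + m) / m) := by
  intro x t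
  set K := Real.exp (2 * k₀ + m) with hK
  set h : ℝ → ℝ := fun s => Real.exp (m * (s - t)) with hh
  have hexpb : ∀ s, Real.exp (F s - F t) ≤ K * h s := by
    intro s
    rw [hK, hh, ← Real.exp_add]
    exact Real.exp_le_exp.2
      (by linarith [F_shift_bound f F m k₀ hf hfper hm hmpos hF hk₀ s t])
  have hInth : IntegrableOn h (Set.Iic t) := expker_integrableOn hmpos t
  have hIh : (∫ s in Set.Iic t, h s) = 1 / m := expker_integral hmpos t
  -- lower bound for every element of the set
  have hlow : ∀ r ∈ wkSet F L α x t, -|C0 - α| * (K / m) ≤ r := by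
    rintro r ⟨γ, γ', hAC, hγt, hInt, rfl⟩
    have hptw : ∀ s, (-|C0 - α|) * (K * h s) ≤
        Real.exp (F s - F t) * (L (γ s) (γ' s) s + α) := by
      intro s
      have h1 : -|C0 - α| ≤ L (γ s) (γ' s) s + α := by
        have := hC0 (γ s) (γ' s) s
        have := le_abs_self (C0 - α)
        linarith
      calc (-|C0 - α|) * (K * h s)
          ≤ (-|C0 - α|) * Real.exp (F s - F t) :=
            mul_le_mul_of_nonpos_left (hexpb s) (neg_nonpos.2 (abs_nonneg _))
        _ = Real.exp (F s - F t) * (-|C0 - α|) := by ring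
        _ ≤ Real.exp (F s - F t) * (L (γ s) (γ' s) s + α) :=
            mul_le_mul_of_nonneg_left h1 (Real.exp_pos _).le
    have hIntBound : IntegrableOn (fun s => (-|C0 - α|) * (K * h s)) (Set.Iic t) :=
      (hInth.const_mul K).const_mul _
    have hmono := integral_mono hIntBound hInt (fun s => hptw s)
    have hIb : (∫ s in Set.Iic t, (-|C0 - α|) * (K * h s)) = -|C0 - α| * (K / m) := by
      rw [integral_const_mul, integral_const_mul, hIh]
      ring
    rw [hIb] at hmono
    exact hmono
  have hbdd : BddBelow (wkSet F L α x t) := ⟨_, hlow⟩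
  -- nonemptiness: the constant curve
  have hFc : Continuous F :=
    (intervalIntegral.continuous_primitive (fun a b => hf.intervalIntegrable a b) 0).congr
      (fun u => (hF u).symm)
  have hLc : Continuous (fun q : Evec n × Evec n × ℝ => L q.1 q.2.1 q.2.2) :=
    hLsm.continuous
  have hLxc : Continuous (fun s : ℝ => L x 0 s) :=
    hLc.comp (continuous_const.prodMk (continuous_const.prodMk continuous_id))
  have hgcont : Continuous (fun s => Real.exp (F s - F t) * (L x 0 s + α)) :=
    (Real.continuous_exp.comp (hFc.sub continuous_const)).mul (hLxc.add continuous_const)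
  set M : ℝ := max |Csup + α| |C0 - α| with hM
  have hgbound : ∀ s, ‖Real.exp (F s - F t) * (L x 0 s + α)‖ ≤ (M * K) * h s := by
    intro s
    have h1 : |L x 0 s + α| ≤ M := by
      rw [abs_le]
      constructor
      · have := hC0 x 0 s
        have h2 := le_abs_self (C0 - α)
        have h3 : |C0 - α| ≤ M := le_max_right _ _
        linarith
      · have := hCsup x s
        have h2 := le_abs_self (Csup + α)
        have h3 : |Csup + α| ≤ M := le_max_left _ _
        linarith
    have h0 : 0 ≤ |L x 0 s + α| := abs_nonneg _
    rw [Real.norm_eq_abs, abs_mul, abs_of_pos (Real.exp_pos _)]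
    calc Real.exp (F s - F t) * |L x 0 s + α|
        ≤ (K * h s) * M :=
          mul_le_mul (hexpb s) h1 h0
            (mul_nonneg (Real.exp_pos _).le (Real.exp_pos _).le)
      _ = (M * K) * h s := by ring
  have hgint : IntegrableOn (fun s => Real.exp (F s - F t) * (L x 0 s + α)) (Set.Iic t) := by
    refine Integrable.mono' ((hInth.const_mul K).const_mul M) ?_ ?_
    · exact hgcont.aestronglyMeasurable
    · exact Filter.Eventually.of_forall (fun s => by
        simpa [mul_assoc] using hgbound s)
  have hmem : (∫ s in Set.Iic t, Real.exp (F s - F t) * (L x 0 s + α)) ∈ wkSet F L α x t := by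
    refine ⟨fun _ => x, fun _ => 0, ?_, rfl, hgint, rfl⟩
    intro a _ b _
    exact ⟨intervalIntegrable_const, by simp⟩
  have hne : (wkSet F L α x t).Nonempty := ⟨_, hmem⟩
  -- upper bound for the constant curve value
  have hub : (∫ s in Set.Iic t, Real.exp (F s - F t) * (L x 0 s + α)) ≤
      |Csup + α| * (K / m) := by
    have hptw : ∀ s, Real.exp (F s - F t) * (L x 0 s + α) ≤ |Csup + α| * (K * h s) := by
      intro s
      have h1 : L x 0 s + α ≤ |Csup + α| := by
        have := hCsup x s
        have h2 := le_abs_self (Csup + α)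
        linarith
      calc Real.exp (F s - F t) * (L x 0 s + α)
          ≤ Real.exp (F s - F t) * |Csup + α| :=
            mul_le_mul_of_nonneg_left h1 (Real.exp_pos _).le
        _ = |Csup + α| * Real.exp (F s - F t) := by ring
        _ ≤ |Csup + α| * (K * h s) :=
            mul_le_mul_of_nonneg_left (hexpb s) (abs_nonneg _)
    have hIntBound : IntegrableOn (fun s => |Csup + α| * (K * h s)) (Set.Iic t) :=
      (hInth.const_mul K).const_mul _
    have hmono := integral_mono hgint hIntBound (fun s => hptw s)
    have hIb : (∫ s in Set.Iic t, |Csup + α| * (K * h s)) = |Csup + α| * (K / m) := by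
      rw [integral_const_mul, integral_const_mul, hIh]
      ring
    rw [hIb] at hmono
    exact hmono
  refine ⟨hne, hbdd, ?_, ?_⟩
  · exact le_csInf hne hlow
  · exact (csInf_le hbdd hmem).trans hub
end
end

section
/- (Domination) For every α ∈ ℝ and every absolutely continuous curve γ : [s₁, s₂] → ℝⁿ, one has e^{F(s₂)} u_α⁻(γ(s₂), s₂) − e^{F(s₁)} u_α⁻(γ(s₁), s₁) ≤ ∫_{s₁}^{s₂} e^{F(τ)} (L(γ(τ), γ'(τ), τ) + α) dτ. -/
open MeasureTheory Real Filter
open scoped RealInnerProductSpace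

noncomputable section

lemma periodic_bddAbove {g : ℝ → ℝ} (hg : Continuous g) (hp : Function.Periodic g 1) :
    ∃ K, ∀ s, g s ≤ K := by
  obtain ⟨y, -, hy⟩ := isCompact_Icc.exists_isMaxOn (Set.nonempty_Icc.2 zero_le_one)
    hg.continuousOn
  refine ⟨g y, fun s => ?_⟩
  have h1 : g s = g (Int.fract s) := by
    have h2 := hp.sub_zsmul_eq (x := s) ⌊s⌋
    rw [Int.fract]
    rw [show ((⌊s⌋ : ℤ) • (1:ℝ)) = (⌊s⌋ : ℝ) by simp] at h2
    exact h2.symm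
  rw [h1]
  exact hy ⟨(Int.fract_nonneg s), (Int.fract_lt_one s).le.trans le_rfl⟩

lemma exp_mul_integrableOn_Iic {m t : ℝ} (hm : 0 < m) :
    IntegrableOn (fun s => Real.exp (m * s)) (Set.Iic t) := by
  rw [← integrable_indicator_iff measurableSet_Iic]
  have h0 : Integrable ((Set.Iic (m * t)).indicator Real.exp) := by
    rw [integrable_indicator_iff measurableSet_Iic]
    exact integrableOn_exp_Iic (m * t)
  have := (integrable_comp_mul_left_iff ((Set.Iic (m * t)).indicator Real.exp) hm.ne').2 h0
  convert this using 1
  · rfl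
  ext x
  by_cases hx : x ≤ t
  · have : m * x ≤ m * t := (mul_le_mul_iff_of_pos_left hm).2 hx
    simp [Set.indicator, hx, this]
  · have : ¬ m * x ≤ m * t := fun h => hx ((mul_le_mul_iff_of_pos_left hm).1 h)
    simp [Set.indicator, hx, this]

lemma F_continuous (f F : ℝ → ℝ) (hf : Continuous f)
    (hF : ∀ t, F t = ∫ τ in (0:ℝ)..t, f τ) : Continuous F := by
  have : F = fun t => ∫ τ in (0:ℝ)..t, f τ := funext hF
  rw [this]
  exact intervalIntegral.continuous_primitive (fun a b => hf.intervalIntegrable a b) 0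

lemma expF_integrableOn (f F : ℝ → ℝ) (hf : Continuous f) (hfper : ∀ t, f (t + 1) = f t)
    (hfmean : 0 < ∫ t in (0:ℝ)..1, f t)
    (hF : ∀ t, F t = ∫ τ in (0:ℝ)..t, f τ) (t : ℝ) :
    IntegrableOn (fun s => Real.exp (F s)) (Set.Iic t) := by
  set m := ∫ τ in (0:ℝ)..1, f τ with hm
  have hfc : ∀ a b, IntervalIntegrable f volume a b := fun a b => hf.intervalIntegrable a b
  have hFc : Continuous F := F_continuous f F hf hF
  have hper : Function.Periodic f 1 := hfper
  have hFadd : ∀ s, F (s + 1) = F s + m := by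
    intro s
    rw [hF, hF, ← intervalIntegral.integral_add_adjacent_intervals (hfc 0 s) (hfc s (s + 1))]
    congr 1
    have h2 := hper.intervalIntegral_add_eq s 0
    simpa using h2
  have hG : Function.Periodic (fun s => F s - m * s) 1 := by
    intro s
    simp only [hFadd s]
    ring
  obtain ⟨K, hK⟩ := periodic_bddAbove (hFc.sub (continuous_const.mul continuous_id)) hG
  have hInt : Integrable (fun s => Real.exp K * Real.exp (m * s)) (volume.restrict (Set.Iic t)) :=
    (exp_mul_integrableOn_Iic hfmean).const_mul _
  refine hInt.mono' ((continuous_exp.comp hFc).aestronglyMeasurable.restrict) ?_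
  filter_upwards with s
  rw [Real.norm_eq_abs, abs_of_pos (Real.exp_pos _), ← Real.exp_add]
  exact Real.exp_le_exp.2 (by have h3 := hK s; simp only [Pi.sub_apply, Pi.mul_apply, id, ← hm] at h3; linarith)

lemma expFsub_integrableOn (f F : ℝ → ℝ) (hf : Continuous f) (hfper : ∀ t, f (t + 1) = f t)
    (hfmean : 0 < ∫ t in (0:ℝ)..1, f t)
    (hF : ∀ t, F t = ∫ τ in (0:ℝ)..t, f τ) (t c : ℝ) :
    IntegrableOn (fun s => Real.exp (F s - c)) (Set.Iic t) := by
  have h : IntegrableOn (fun s => Real.exp (-c) * Real.exp (F s)) (Set.Iic t) :=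
    (expF_integrableOn f F hf hfper hfmean hF t).const_mul (Real.exp (-c))
  refine h.congr_fun (fun s _ => ?_) measurableSet_Iic
  beta_reduce
  rw [← Real.exp_add]
  ring_nf

lemma wkSet_bddBelow {n : ℕ} (f F : ℝ → ℝ) (hf : Continuous f) (hfper : ∀ t, f (t + 1) = f t)
    (hfmean : 0 < ∫ t in (0:ℝ)..1, f t)
    (hF : ∀ t, F t = ∫ τ in (0:ℝ)..t, f τ)
    (L : Evec n → Evec n → ℝ → ℝ)
    (hLsuper : ∀ k : ℝ, 0 ≤ k → ∃ C : ℝ, ∀ x v t, k * ‖v‖ - C ≤ L x v t)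
    (α : ℝ) (x : Evec n) (t : ℝ) : BddBelow (wkSet F L α x t) := by
  obtain ⟨C, hC⟩ := hLsuper 0 le_rfl
  have hIexp : IntegrableOn (fun s => Real.exp (F s - F t)) (Set.Iic t) :=
    expFsub_integrableOn f F hf hfper hfmean hF t (F t)
  refine ⟨∫ s in Set.Iic t, Real.exp (F s - F t) * (α - C), ?_⟩
  rintro r ⟨σ, σ', -, -, hint, rfl⟩
  refine setIntegral_mono_on (hIexp.mul_const _) hint measurableSet_Iic (fun s _ => ?_)
  have h1 : α - C ≤ L (σ s) (σ' s) s + α := by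
    have := hC (σ s) (σ' s) s
    simp only [zero_mul, zero_sub] at this
    linarith
  exact mul_le_mul_of_nonneg_left h1 (Real.exp_pos _).le

lemma wkSet_nonempty {n : ℕ} (f F : ℝ → ℝ) (hf : Continuous f) (hfper : ∀ t, f (t + 1) = f t)
    (hfmean : 0 < ∫ t in (0:ℝ)..1, f t)
    (hF : ∀ t, F t = ∫ τ in (0:ℝ)..t, f τ)
    (L : Evec n → Evec n → ℝ → ℝ)
    (hLc : Continuous (fun q : Evec n × Evec n × ℝ => L q.1 q.2.1 q.2.2))
    (hLtper : ∀ (x v : Evec n) (t : ℝ), L x v (t + 1) = L x v t)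
    (α : ℝ) (x : Evec n) (t : ℝ) : (wkSet F L α x t).Nonempty := by
  have hFc : Continuous F := F_continuous f F hf hF
  have hLx : Continuous (fun s : ℝ => L x 0 s + α) :=
    (hLc.comp (by fun_prop : Continuous (fun s : ℝ => ((x, (0 : Evec n), s) :
      Evec n × Evec n × ℝ)))).add continuous_const
  obtain ⟨K, hK⟩ := periodic_bddAbove (continuous_abs.comp hLx)
    (by intro s; simp only [Function.comp_apply]; rw [hLtper])
  have hIexp : IntegrableOn (fun s => Real.exp (F s - F t)) (Set.Iic t) :=
    expFsub_integrableOn f F hf hfper hfmean hF t (F t)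
  have hint : IntegrableOn (fun s => Real.exp (F s - F t) * (L x 0 s + α)) (Set.Iic t) := by
    refine (hIexp.mul_const K).mono'
      (((continuous_exp.comp (hFc.sub continuous_const)).mul hLx).aestronglyMeasurable.restrict)
      ?_
    filter_upwards with s
    rw [Real.norm_eq_abs, abs_mul, abs_of_pos (Real.exp_pos _)]
    exact mul_le_mul_of_nonneg_left (hK s) (Real.exp_pos _).le
  refine ⟨_, fun _ => x, fun _ => 0, fun a _ b _ => ⟨intervalIntegrable_const, by simp⟩,
    rfl, hint, rfl⟩

/-- **Domination.** Along every absolutely continuous curve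
`γ : [s₁,s₂] → ℝⁿ` (with integrable action), one has
`e^{F(s₂)} u_α⁻(γ(s₂),s₂) - e^{F(s₁)} u_α⁻(γ(s₁),s₁) ≤ ∫_{s₁}^{s₂} e^{F} (L + α)`. -/
theorem weak_kam_domination
    (n : ℕ) (hn : 1 ≤ n)
    (f F : ℝ → ℝ)
    (hf : Continuous f) (hfper : ∀ t, f (t + 1) = f t)
    (hfmean : 0 < ∫ t in (0:ℝ)..1, f t)
    (hF : ∀ t, F t = ∫ τ in (0:ℝ)..t, f τ)
    (L : Evec n → Evec n → ℝ → ℝ)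
    (hLsm : ContDiff ℝ 2 (fun q : Evec n × Evec n × ℝ => L q.1 q.2.1 q.2.2))
    (hLxper : ∀ (k : Fin n → ℤ) (x v : Evec n) (t : ℝ), L (x + intVec k) v t = L x v t)
    (hLtper : ∀ (x v : Evec n) (t : ℝ), L x v (t + 1) = L x v t)
    (hLconv : ∀ (x : Evec n) (t : ℝ) (v w : Evec n), w ≠ 0 →
      0 < iteratedFDeriv ℝ 2 (fun v' => L x v' t) v ![w, w])
    (hLsuper : ∀ k : ℝ, 0 ≤ k → ∃ C : ℝ, ∀ x v t, k * ‖v‖ - C ≤ L x v t)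
    (α : ℝ) :
    ∀ (s₁ s₂ : ℝ), s₁ ≤ s₂ → ∀ (γ γ' : ℝ → Evec n),
      ACOn γ γ' (Set.Icc s₁ s₂) →
      IntervalIntegrable (fun τ => Real.exp (F τ) * (L (γ τ) (γ' τ) τ + α))
        MeasureTheory.volume s₁ s₂ →
      Real.exp (F s₂) * uWK F L α (γ s₂) s₂ - Real.exp (F s₁) * uWK F L α (γ s₁) s₁ ≤
        ∫ τ in s₁..s₂, Real.exp (F τ) * (L (γ τ) (γ' τ) τ + α) := by
  classical
  intro s₁ s₂ h12 γ γ' hAC hInt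
  have hFc : Continuous F := F_continuous f F hf hF
  have hS₁ne : (wkSet F L α (γ s₁) s₁).Nonempty :=
    wkSet_nonempty f F hf hfper hfmean hF L hLsm.continuous hLtper α _ s₁
  have hS₂bdd : BddBelow (wkSet F L α (γ s₂) s₂) :=
    wkSet_bddBelow f F hf hfper hfmean hF L hLsuper α _ s₂
  set A := Real.exp (F s₁ - F s₂) with hA
  have hApos : 0 < A := Real.exp_pos _
  set B := ∫ τ in s₁..s₂, Real.exp (F τ - F s₂) * (L (γ τ) (γ' τ) τ + α) with hB
  have hγInt : IntegrableOn (fun τ => Real.exp (F τ) * (L (γ τ) (γ' τ) τ + α))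
      (Set.Ioc s₁ s₂) := (intervalIntegrable_iff_integrableOn_Ioc_of_le h12).1 hInt
  have key : ∀ r ∈ wkSet F L α (γ s₁) s₁, A * r + B ∈ wkSet F L α (γ s₂) s₂ := by
    rintro r ⟨σ, σ', hσAC, hσend, hσInt, rfl⟩
    set δ : ℝ → Evec n := fun s => if s ≤ s₁ then σ s else γ s with hδ
    set δ' : ℝ → Evec n := fun s => if s ≤ s₁ then σ' s else γ' s with hδ'
    have hδlow : ∀ s, s ≤ s₁ → δ s = σ s := by
      intro s hs; simp only [hδ]; rw [if_pos hs]
    have hδ'low : ∀ s, s ≤ s₁ → δ' s = σ' s := by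
      intro s hs; simp only [hδ']; rw [if_pos hs]
    have hδhigh : ∀ s, s₁ ≤ s → δ s = γ s := by
      intro s hs
      by_cases h : s ≤ s₁
      · have he : s = s₁ := le_antisymm h hs
        simp only [hδ]; rw [if_pos h, he, hσend]
      · simp only [hδ]; rw [if_neg h]
    have hδ'high : ∀ s, s₁ < s → δ' s = γ' s := by
      intro s hs; simp only [hδ']; rw [if_neg (not_le.2 hs)]
    have keyLow : ∀ a b, a ≤ b → b ≤ s₁ →
        IntervalIntegrable δ' volume a b ∧ δ b = δ a + ∫ τ in a..b, δ' τ := by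
      intro a b hab hb
      have ha : a ≤ s₁ := hab.trans hb
      obtain ⟨hi, he⟩ := hσAC a ha b hb
      have hii : IntervalIntegrable δ' volume a b := by
        rw [intervalIntegrable_iff_integrableOn_Ioc_of_le hab] at hi ⊢
        exact hi.congr_fun (fun s hs => (hδ'low s (hs.2.trans hb)).symm) measurableSet_Ioc
      refine ⟨hii, ?_⟩
      rw [hδlow a ha, hδlow b hb, he]
      congr 1
      rw [intervalIntegral.integral_of_le hab, intervalIntegral.integral_of_le hab]
      exact setIntegral_congr_fun measurableSet_Ioc
        (fun s hs => (hδ'low s (hs.2.trans hb)).symm)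
    have keyHigh : ∀ a b, s₁ ≤ a → a ≤ b → b ≤ s₂ →
        IntervalIntegrable δ' volume a b ∧ δ b = δ a + ∫ τ in a..b, δ' τ := by
      intro a b ha hab hb
      obtain ⟨hi, he⟩ := hAC a ⟨ha, hab.trans hb⟩ b ⟨ha.trans hab, hb⟩
      have hii : IntervalIntegrable δ' volume a b := by
        rw [intervalIntegrable_iff_integrableOn_Ioc_of_le hab] at hi ⊢
        exact hi.congr_fun (fun s hs => (hδ'high s (lt_of_le_of_lt ha hs.1)).symm)
          measurableSet_Ioc
      refine ⟨hii, ?_⟩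
      rw [hδhigh a ha, hδhigh b (ha.trans hab), he]
      congr 1
      rw [intervalIntegral.integral_of_le hab, intervalIntegral.integral_of_le hab]
      exact setIntegral_congr_fun measurableSet_Ioc
        (fun s hs => (hδ'high s (lt_of_le_of_lt ha hs.1)).symm)
    have key2 : ∀ a ∈ Set.Iic s₂, ∀ b ∈ Set.Iic s₂, a ≤ b →
        IntervalIntegrable δ' volume a b ∧ δ b = δ a + ∫ τ in a..b, δ' τ := by
      intro a ha b hb hab
      rcases le_or_gt b s₁ with h | h
      rotate_left
      rcases le_or_gt s₁ a with h' | h'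
      · exact keyHigh a b h' hab hb
      · obtain ⟨hi1, he1⟩ := keyLow a s₁ h'.le le_rfl
        obtain ⟨hi2, he2⟩ := keyHigh s₁ b le_rfl h.le hb
        refine ⟨hi1.trans hi2, ?_⟩
        rw [he2, he1, ← intervalIntegral.integral_add_adjacent_intervals hi1 hi2]
        abel
      · exact keyLow a b hab h
    have hACδ : ACOn δ δ' (Set.Iic s₂) := by
      intro a ha b hb
      rcases le_total a b with hab | hab
      · exact key2 a ha b hb hab
      · obtain ⟨hi, he⟩ := key2 b hb a ha hab
        refine ⟨hi.symm, ?_⟩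
        rw [he, intervalIntegral.integral_symm a b]
        abel
    have hEq1 : Set.EqOn (fun s => A * (Real.exp (F s - F s₁) * (L (σ s) (σ' s) s + α)))
        (fun s => Real.exp (F s - F s₂) * (L (δ s) (δ' s) s + α)) (Set.Iic s₁) := by
      intro s hs
      simp only
      rw [hδlow s hs, hδ'low s hs, hA, ← mul_assoc, ← Real.exp_add]
      ring_nf
    have hEq2 : Set.EqOn (fun τ => Real.exp (-F s₂) * (Real.exp (F τ) * (L (γ τ) (γ' τ) τ + α)))
        (fun τ => Real.exp (F τ - F s₂) * (L (γ τ) (γ' τ) τ + α)) (Set.Ioc s₁ s₂) := by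
      intro s _
      simp only
      rw [← mul_assoc, ← Real.exp_add]
      ring_nf
    have hEq3 : Set.EqOn (fun τ => Real.exp (F τ - F s₂) * (L (γ τ) (γ' τ) τ + α))
        (fun s => Real.exp (F s - F s₂) * (L (δ s) (δ' s) s + α)) (Set.Ioc s₁ s₂) := by
      intro s hs
      simp only
      rw [hδhigh s hs.1.le, hδ'high s hs.1]
    have hg1 : IntegrableOn (fun s => Real.exp (F s - F s₂) * (L (δ s) (δ' s) s + α))
        (Set.Iic s₁) := by
      have h := hσInt.const_mul A
      exact (IntegrableOn.congr_fun h hEq1 measurableSet_Iic)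
    have hg2' : IntegrableOn (fun τ => Real.exp (F τ - F s₂) * (L (γ τ) (γ' τ) τ + α))
        (Set.Ioc s₁ s₂) := by
      have h := hγInt.const_mul (Real.exp (-F s₂))
      exact (IntegrableOn.congr_fun h hEq2 measurableSet_Ioc)
    have hg2 : IntegrableOn (fun s => Real.exp (F s - F s₂) * (L (δ s) (δ' s) s + α))
        (Set.Ioc s₁ s₂) := hg2'.congr_fun hEq3 measurableSet_Ioc
    have hgfull : IntegrableOn (fun s => Real.exp (F s - F s₂) * (L (δ s) (δ' s) s + α))
        (Set.Iic s₂) := by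
      rw [← Set.Iic_union_Ioc_eq_Iic h12]
      exact hg1.union hg2
    refine ⟨δ, δ', hACδ, hδhigh s₂ h12, hgfull, ?_⟩
    rw [← Set.Iic_union_Ioc_eq_Iic h12,
      setIntegral_union (Set.Iic_disjoint_Ioc le_rfl) measurableSet_Ioc hg1 hg2]
    congr 1
    · rw [← setIntegral_congr_fun measurableSet_Iic hEq1, integral_const_mul]
    · rw [← setIntegral_congr_fun measurableSet_Ioc hEq3, hB,
        intervalIntegral.integral_of_le h12]
  set u₁ := uWK F L α (γ s₁) s₁ with hu₁
  set u₂ := uWK F L α (γ s₂) s₂ with hu₂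
  have h2 : ∀ r ∈ wkSet F L α (γ s₁) s₁, u₂ ≤ A * r + B := fun r hr =>
    csInf_le hS₂bdd (key r hr)
  have h3 : (u₂ - B) / A ≤ u₁ := by
    refine le_csInf hS₁ne (fun r hr => ?_)
    rw [div_le_iff₀ hApos]
    have h2' := h2 r hr
    have hc : A * r = r * A := mul_comm _ _
    linarith
  have h4 : u₂ ≤ A * u₁ + B := by
    rw [div_le_iff₀ hApos] at h3
    have hc : u₁ * A = A * u₁ := mul_comm _ _
    linarith
  have hBI : Real.exp (F s₂) * B = ∫ τ in s₁..s₂, Real.exp (F τ) * (L (γ τ) (γ' τ) τ + α) := by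
    rw [hB, ← intervalIntegral.integral_const_mul]
    refine intervalIntegral.integral_congr (fun τ _ => ?_)
    rw [← mul_assoc, ← Real.exp_add]
    ring_nf
  have h5 : Real.exp (F s₂) * u₂ ≤ Real.exp (F s₂) * (A * u₁ + B) :=
    mul_le_mul_of_nonneg_left h4 (Real.exp_pos (F s₂)).le
  have hEA : Real.exp (F s₂) * A = Real.exp (F s₁) := by
    rw [hA, ← Real.exp_add]; ring_nf
  have h6 : Real.exp (F s₂) * (A * u₁ + B) =
      Real.exp (F s₁) * u₁ + Real.exp (F s₂) * B := by
    rw [mul_add, ← mul_assoc, hEA]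
  rw [← hBI]
  linarith
end
end

section
/- (Convergence of finite-horizon minimal actions) For α ∈ ℝ, s < t and z, x ∈ ℝⁿ define h_α^{s,t}(z,x) := inf { ∫_s^t e^{F(τ)} (L(γ(τ),γ'(τ),τ) + α) dτ : γ : [s,t] → ℝⁿ absolutely continuous, γ(s) − z ∈ ℤⁿ, γ(t) = x }. Then h_α^{s,t}(z,x) → e^{F(t)} u_α⁻(x,t) as s → −∞, uniformly in the other variables: sup { |h_α^{s,t}(z,x) − e^{F(t)} u_α⁻(x,t)| : z, x ∈ ℝⁿ, t ≥ s + 1 } → 0 as s → −∞. -/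
open MeasureTheory Real Filter
open scoped RealInnerProductSpace

noncomputable section

/-- The finite-horizon minimal action `h_α^{s,t}(z,x)`: infimum of
`∫_s^t e^{F(τ)} (L + α)` over absolutely continuous curves on `[s,t]` ending at
`x` and starting at a `ℤⁿ`-translate of `z`. -/
def hAct {n : ℕ} (F : ℝ → ℝ) (L : Evec n → Evec n → ℝ → ℝ) (α : ℝ)
    (s t : ℝ) (z x : Evec n) : ℝ :=
  sInf { r | ∃ γ γ' : ℝ → Evec n, ACOn γ γ' (Set.Icc s t) ∧
      (∃ k : Fin n → ℤ, γ s = z + intVec k) ∧ γ t = x ∧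
      IntervalIntegrable (fun τ => Real.exp (F τ) * (L (γ τ) (γ' τ) τ + α))
        MeasureTheory.volume s t ∧
      r = ∫ τ in s..t, Real.exp (F τ) * (L (γ τ) (γ' τ) τ + α) }


lemma ACOn_of_le {n : ℕ} {γ γ' : ℝ → Evec n} {S : Set ℝ}
    (h : ∀ a ∈ S, ∀ b ∈ S, a ≤ b →
      IntervalIntegrable γ' MeasureTheory.volume a b ∧ γ b = γ a + ∫ τ in a..b, γ' τ) :
    ACOn γ γ' S := by
  intro a ha b hb
  rcases le_total a b with hab | hba
  · exact h a ha b hb hab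
  · obtain ⟨hi, he⟩ := h b hb a ha hba
    refine ⟨hi.symm, ?_⟩
    rw [intervalIntegral.integral_symm, he]
    abel

lemma ACOn.mono {n : ℕ} {γ γ' : ℝ → Evec n} {S T : Set ℝ} (h : ACOn γ γ' S) (hsub : T ⊆ S) :
    ACOn γ γ' T := fun a ha b hb => h a (hsub ha) b (hsub hb)

lemma ACOn_const {n : ℕ} (p : Evec n) (S : Set ℝ) :
    ACOn (fun _ => p) (fun _ => (0 : Evec n)) S := by
  intro a _ b _
  refine ⟨intervalIntegrable_const, by simp⟩

lemma ACOn_affine {n : ℕ} (p d : Evec n) (s : ℝ) (S : Set ℝ) :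
    ACOn (fun τ => p + (τ - s) • d) (fun _ => d) S := by
  intro a _ b _
  refine ⟨intervalIntegrable_const, ?_⟩
  rw [intervalIntegral.integral_const]
  module

lemma intervalIntegrable_congr_Ioc {E : Type*} [NormedAddCommGroup E] {g g' : ℝ → E} {a b : ℝ} (hab : a ≤ b)
    (heq : Set.EqOn g g' (Set.Ioc a b)) (hg : IntervalIntegrable g MeasureTheory.volume a b) :
    IntervalIntegrable g' MeasureTheory.volume a b := by
  rw [intervalIntegrable_iff_integrableOn_Ioc_of_le hab] at hg ⊢
  exact hg.congr_fun heq measurableSet_Ioc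

lemma intervalIntegral_congr_Ioc {E : Type*} [NormedAddCommGroup E] [NormedSpace ℝ E] {g g' : ℝ → E} {a b : ℝ} (hab : a ≤ b)
    (heq : Set.EqOn g g' (Set.Ioc a b)) :
    ∫ τ in a..b, g τ = ∫ τ in a..b, g' τ := by
  rw [intervalIntegral.integral_of_le hab, intervalIntegral.integral_of_le hab]
  exact setIntegral_congr_fun measurableSet_Ioc heq

lemma ACOn.glue {n : ℕ} {γ₁ γ₁' γ₂ γ₂' : ℝ → Evec n} {c : ℝ} {S : Set ℝ} (hc : c ∈ S)
    (h₁ : ACOn γ₁ γ₁' (S ∩ Set.Iic c)) (h₂ : ACOn γ₂ γ₂' (S ∩ Set.Ici c))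
    (hb : γ₁ c = γ₂ c) :
    ACOn (fun τ => if τ ≤ c then γ₁ τ else γ₂ τ)
      (fun τ => if τ ≤ c then γ₁' τ else γ₂' τ) S := by
  set γ := fun τ => if τ ≤ c then γ₁ τ else γ₂ τ with hγ
  set γ' := fun τ => if τ ≤ c then γ₁' τ else γ₂' τ with hγ'
  -- basic pieces for ordered subintervals
  have piece1 : ∀ a ∈ S, ∀ b ∈ S, a ≤ b → b ≤ c →
      IntervalIntegrable γ' MeasureTheory.volume a b ∧ γ b = γ a + ∫ τ in a..b, γ' τ := by
    intro a ha b hbS hab hbc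
    obtain ⟨hi, he⟩ := h₁ a ⟨ha, hab.trans hbc⟩ b ⟨hbS, hbc⟩
    have heq : Set.EqOn γ₁' γ' (Set.Ioc a b) := fun τ hτ => by
      simp only [hγ', if_pos (hτ.2.trans hbc)]
    refine ⟨intervalIntegrable_congr_Ioc hab heq hi, ?_⟩
    rw [← intervalIntegral_congr_Ioc hab heq]
    simpa only [hγ, if_pos (hab.trans hbc), if_pos hbc] using he
  have piece2 : ∀ a ∈ S, ∀ b ∈ S, a ≤ b → c ≤ a →
      IntervalIntegrable γ' MeasureTheory.volume a b ∧ γ b = γ a + ∫ τ in a..b, γ' τ := by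
    intro a ha b hbS hab hca
    obtain ⟨hi, he⟩ := h₂ a ⟨ha, hca⟩ b ⟨hbS, hca.trans hab⟩
    have heq : Set.EqOn γ₂' γ' (Set.Ioc a b) := fun τ hτ => by
      have : ¬ τ ≤ c := not_le.mpr (lt_of_le_of_lt hca hτ.1)
      simp only [hγ', if_neg this]
    refine ⟨intervalIntegrable_congr_Ioc hab heq hi, ?_⟩
    rw [← intervalIntegral_congr_Ioc hab heq]
    have hγa : γ a = γ₂ a := by
      rcases le_or_gt a c with h | h
      · have : a = c := le_antisymm h hca
        simp only [hγ, this, if_pos le_rfl, hb]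
      · simp only [hγ, if_neg (not_le.mpr h)]
    have hγb : γ b = γ₂ b := by
      rcases le_or_gt b c with h | h
      · have : b = c := le_antisymm h (hca.trans hab)
        simp only [hγ, this, if_pos le_rfl, hb]
      · simp only [hγ, if_neg (not_le.mpr h)]
    rw [hγa, hγb, he]
  refine ACOn_of_le ?_
  intro a ha b hbS hab
  rcases le_or_gt b c with hbc | hcb
  · exact piece1 a ha b hbS hab hbc
  rcases le_or_gt a c with hac | hca
  · -- mixed case: a ≤ c < b
    obtain ⟨hi1, he1⟩ := piece1 a ha c hc hac le_rfl
    obtain ⟨hi2, he2⟩ := piece2 c hc b hbS hcb.le le_rfl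
    refine ⟨hi1.trans hi2, ?_⟩
    rw [← intervalIntegral.integral_add_adjacent_intervals hi1 hi2, he2, he1]
    abel
  · exact piece2 a ha b hbS hab hca.le

lemma L_upper_bound {n : ℕ} {L : Evec n → Evec n → ℝ → ℝ}
    (hLc : Continuous (fun q : Evec n × Evec n × ℝ => L q.1 q.2.1 q.2.2))
    (hLxper : ∀ (k : Fin n → ℤ) (x v : Evec n) (t : ℝ), L (x + intVec k) v t = L x v t)
    (hLtper : ∀ (x v : Evec n) (t : ℝ), L x v (t + 1) = L x v t) :
    ∃ M : ℝ, 0 ≤ M ∧ ∀ (x v : Evec n) (t : ℝ), ‖v‖ ≤ (n:ℝ) → L x v t ≤ M := by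
  set K : Set (Evec n × Evec n × ℝ) :=
    Metric.closedBall (0) (n:ℝ) ×ˢ (Metric.closedBall (0) (n:ℝ) ×ˢ Set.Icc (0:ℝ) 1) with hK
  have hKc : IsCompact K :=
    (isCompact_closedBall _ _).prod ((isCompact_closedBall _ _).prod isCompact_Icc)
  have hKne : K.Nonempty := by
    refine ⟨(0, 0, 0), ?_⟩
    constructor
    · simpa using n.cast_nonneg
    constructor
    · simpa using n.cast_nonneg
    · exact ⟨le_rfl, by norm_num⟩
  obtain ⟨q₀, _, hmax⟩ := hKc.exists_isMaxOn hKne hLc.continuousOn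
  refine ⟨max (L q₀.1 q₀.2.1 q₀.2.2) 0, le_max_right _ _, fun x v t hv => ?_⟩
  set y : Evec n := WithLp.toLp 2 (fun i => Int.fract (x i) : Fin n → ℝ) with hy
  have hxy : L x v t = L y v t := by
    have hx : x = y + intVec (fun i => ⌊x i⌋) := by
      ext i
      simp only [hy, PiLp.add_apply, intVec, PiLp.toLp_apply]
      rw [Int.fract]; ring
    rw [hx, hLxper]
  have hty : L y v t = L y v (Int.fract t) := by
    have h1 : L y v (t - (⌊t⌋ : ℤ) * 1) = L y v t :=
      Function.Periodic.sub_int_mul_eq (f := fun τ => L y v τ) (fun τ => hLtper y v τ) ⌊t⌋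
    rw [← h1]
    congr 1
    rw [Int.fract]; ring
  have hny : ‖y‖ ≤ (n:ℝ) := by
    have h1 : ‖y‖ = Real.sqrt (∑ i : Fin n, ‖y i‖ ^ 2) := EuclideanSpace.norm_eq y
    have h2 : (∑ i : Fin n, ‖y i‖ ^ 2) ≤ (n:ℝ) := by
      calc (∑ i : Fin n, ‖y i‖ ^ 2) ≤ ∑ _i : Fin n, (1:ℝ) := by
            refine Finset.sum_le_sum fun i _ => ?_
            have h3 : |Int.fract (x i)| ≤ 1 := by
              rw [abs_of_nonneg (Int.fract_nonneg _)]
              exact (Int.fract_lt_one _).le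
            calc ‖y i‖ ^ 2 = |Int.fract (x i)| ^ 2 := by rw [hy]; simp [Real.norm_eq_abs]
              _ ≤ 1 ^ 2 := pow_le_pow_left₀ (abs_nonneg _) h3 2
              _ = 1 := one_pow 2
        _ = (n:ℝ) := by simp
    calc ‖y‖ ≤ Real.sqrt (n:ℝ) := by rw [h1]; exact Real.sqrt_le_sqrt h2
      _ ≤ (n:ℝ) := by
          rw [Real.sqrt_le_iff]
          have : (n:ℕ) ≤ n^2 := Nat.le_self_pow two_ne_zero n
          exact ⟨n.cast_nonneg, by exact_mod_cast this⟩
  have hyK : (y, v, Int.fract t) ∈ K := by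
    refine ⟨?_, ?_, ⟨Int.fract_nonneg _, (Int.fract_lt_one _).le⟩⟩
    · simpa [mem_closedBall_zero_iff] using hny
    · simpa [mem_closedBall_zero_iff] using hv
  calc L x v t = L y v (Int.fract t) := by rw [hxy, hty]
    _ ≤ L q₀.1 q₀.2.1 q₀.2.2 := hmax hyK
    _ ≤ max (L q₀.1 q₀.2.1 q₀.2.2) 0 := le_max_left _ _

lemma norm_le_of_coords01 {n : ℕ} (y : Evec n) (h : ∀ i, |y i| ≤ 1) : ‖y‖ ≤ (n:ℝ) := by
  have h1 : ‖y‖ = Real.sqrt (∑ i : Fin n, ‖y i‖ ^ 2) := EuclideanSpace.norm_eq y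
  have h2 : (∑ i : Fin n, ‖y i‖ ^ 2) ≤ (n:ℝ) := by
    calc (∑ i : Fin n, ‖y i‖ ^ 2) ≤ ∑ _i : Fin n, (1:ℝ) := by
          refine Finset.sum_le_sum fun i _ => ?_
          calc ‖y i‖ ^ 2 = |y i| ^ 2 := by simp [Real.norm_eq_abs]
            _ ≤ 1 ^ 2 := pow_le_pow_left₀ (abs_nonneg _) (h i) 2
            _ = 1 := one_pow 2
      _ = (n:ℝ) := by simp
  calc ‖y‖ ≤ Real.sqrt (n:ℝ) := by rw [h1]; exact Real.sqrt_le_sqrt h2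
    _ ≤ (n:ℝ) := by
        rw [Real.sqrt_le_iff]
        have : (n:ℕ) ≤ n^2 := Nat.le_self_pow two_ne_zero n
        exact ⟨n.cast_nonneg, by exact_mod_cast this⟩
lemma expMul_intervalIntegral (m : ℝ) (hm : m ≠ 0) (a b : ℝ) :
    ∫ τ in a..b, rexp (m * τ) = m⁻¹ * (rexp (m * b) - rexp (m * a)) := by
  have := intervalIntegral.integral_comp_mul_left (c := m) (fun x => rexp x) hm (a := a) (b := b)
  rw [this, integral_exp]; simp

lemma expMul_integrableOn_Iic (m b : ℝ) (hm : 0 < m) :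
    IntegrableOn (fun τ => rexp (m * τ)) (Set.Iic b) := by
  refine integrableOn_Iic_of_intervalIntegral_norm_bounded (m⁻¹ * rexp (m * b)) b
    (fun y => ((continuous_exp.comp (continuous_const.mul continuous_id)).intervalIntegrable _ _).1)
    Filter.tendsto_id (Filter.Eventually.of_forall fun y => ?_)
  have : ∀ τ : ℝ, ‖rexp (m * τ)‖ = rexp (m * τ) := fun τ => norm_of_nonneg (exp_pos _).le
  simp_rw [this, expMul_intervalIntegral m hm.ne']
  have h1 : (0:ℝ) < rexp (m * (id y)) := exp_pos _
  have h2 : (0:ℝ) ≤ m⁻¹ := (inv_pos.mpr hm).le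
  nlinarith

lemma expMul_integral_Iic (m b : ℝ) (hm : 0 < m) :
    ∫ τ in Set.Iic b, rexp (m * τ) = m⁻¹ * rexp (m * b) := by
  refine tendsto_nhds_unique
    (intervalIntegral_tendsto_integral_Iic _ (expMul_integrableOn_Iic m b hm) Filter.tendsto_id) ?_
  simp_rw [expMul_intervalIntegral m hm.ne']
  have : Filter.Tendsto (fun y : ℝ => rexp (m * y)) Filter.atBot (nhds 0) := by
    apply tendsto_exp_atBot.comp
    exact Filter.Tendsto.const_mul_atBot hm Filter.tendsto_id
  have := ((tendsto_const_nhds (x := rexp (m*b))).sub this).const_mul m⁻¹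
  simpa using this

lemma expF_integrableOn_s10 {F : ℝ → ℝ} (hFc : Continuous F) {m B : ℝ} (hm : 0 < m)
    (hub : ∀ u, F u ≤ m * u + B) (b : ℝ) :
    IntegrableOn (fun τ => rexp (F τ)) (Set.Iic b) := by
  refine Integrable.mono' ((expMul_integrableOn_Iic m b hm).const_mul (rexp B))
    (hFc.rexp.aestronglyMeasurable.restrict) (Filter.Eventually.of_forall fun τ => ?_)
  rw [norm_of_nonneg (exp_pos _).le]
  calc rexp (F τ) ≤ rexp (m * τ + B) := exp_le_exp.mpr (by linarith [hub τ])
    _ = rexp B * rexp (m * τ) := by rw [← exp_add]; ring_nf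

lemma expF_integral_le {F : ℝ → ℝ} (hFc : Continuous F) {m B : ℝ} (hm : 0 < m)
    (hub : ∀ u, F u ≤ m * u + B) (b : ℝ) :
    ∫ τ in Set.Iic b, rexp (F τ) ≤ rexp B / m * rexp (m * b) := by
  have h1 : ∫ τ in Set.Iic b, rexp (F τ) ≤ ∫ τ in Set.Iic b, rexp B * rexp (m * τ) := by
    refine setIntegral_mono_on (expF_integrableOn_s10 hFc hm hub b)
      ((expMul_integrableOn_Iic m b hm).const_mul (rexp B)) measurableSet_Iic fun τ _ => ?_
    calc rexp (F τ) ≤ rexp (m * τ + B) := exp_le_exp.mpr (by linarith [hub τ])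
      _ = rexp B * rexp (m * τ) := by rw [← exp_add]; ring_nf
  rw [MeasureTheory.integral_const_mul, expMul_integral_Iic m b hm] at h1
  calc ∫ τ in Set.Iic b, rexp (F τ) ≤ rexp B * (m⁻¹ * rexp (m * b)) := h1
    _ = rexp B / m * rexp (m * b) := by ring

lemma bounded_of_periodic {g : ℝ → ℝ} (hg : Continuous g) (hp : Function.Periodic g 1) :
    ∃ B : ℝ, 0 ≤ B ∧ ∀ u, |g u| ≤ B := by
  obtain ⟨p, hpmem, hpmax⟩ := isCompact_Icc.exists_isMaxOn (⟨0, by norm_num⟩ :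
    (Set.Icc (0:ℝ) 1).Nonempty) hg.abs.continuousOn
  refine ⟨|g p|, abs_nonneg _, fun u => ?_⟩
  have h1 : g (u - (⌊u⌋ : ℤ) * 1) = g u := hp.sub_int_mul_eq ⌊u⌋
  have h2 : u - (⌊u⌋ : ℤ) * 1 = Int.fract u := by rw [Int.fract]; ring
  have h3 : Int.fract u ∈ Set.Icc (0:ℝ) 1 :=
    ⟨Int.fract_nonneg u, (Int.fract_lt_one u).le⟩
  calc |g u| = |g (Int.fract u)| := by rw [← h1, h2]
    _ ≤ |g p| := hpmax h3


set_option maxHeartbeats 1000000 in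
/-- The finite-horizon minimal actions converge to
`e^{F(t)} u_α⁻(x,t)` as `s → -∞`, uniformly in `z`, `x` and `t ≥ s + 1`. -/
theorem finite_horizon_action_uniform_convergence
    (n : ℕ) (hn : 1 ≤ n)
    (f F : ℝ → ℝ)
    (hf : Continuous f) (hfper : ∀ t, f (t + 1) = f t)
    (hfmean : 0 < ∫ t in (0:ℝ)..1, f t)
    (hF : ∀ t, F t = ∫ τ in (0:ℝ)..t, f τ)
    (L : Evec n → Evec n → ℝ → ℝ)
    (hLsm : ContDiff ℝ 2 (fun q : Evec n × Evec n × ℝ => L q.1 q.2.1 q.2.2))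
    (hLxper : ∀ (k : Fin n → ℤ) (x v : Evec n) (t : ℝ), L (x + intVec k) v t = L x v t)
    (hLtper : ∀ (x v : Evec n) (t : ℝ), L x v (t + 1) = L x v t)
    (hLconv : ∀ (x : Evec n) (t : ℝ) (v w : Evec n), w ≠ 0 →
      0 < iteratedFDeriv ℝ 2 (fun v' => L x v' t) v ![w, w])
    (hLsuper : ∀ k : ℝ, 0 ≤ k → ∃ C : ℝ, ∀ x v t, k * ‖v‖ - C ≤ L x v t)
    (hcomp : ∀ (x₀ v₀ : Evec n) (t₀ : ℝ), ∃ γ : ℝ → Evec n,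
      ContDiff ℝ 2 γ ∧ γ t₀ = x₀ ∧ deriv γ t₀ = v₀ ∧
      ∀ t : ℝ, HasDerivAt
        (fun σ => fderiv ℝ (fun v => L (γ σ) v σ) (deriv γ σ))
        (fderiv ℝ (fun y => L y (deriv γ t) t) (γ t)
          - f t • fderiv ℝ (fun v => L (γ t) v t) (deriv γ t)) t)
    (α : ℝ) :
    ∀ ε : ℝ, 0 < ε → ∃ S : ℝ, ∀ s : ℝ, s ≤ S →
      ∀ (z x : Evec n) (t : ℝ), s + 1 ≤ t →
        |hAct F L α s t z x - Real.exp (F t) * uWK F L α x t| ≤ ε := by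
  intro ε hε
  -- properties of F
  have hFfun : F = fun u => ∫ τ in (0:ℝ)..u, f τ := funext hF
  have hFc : Continuous F := by
    rw [hFfun]
    have hprim : ∀ a b : ℝ, IntervalIntegrable f MeasureTheory.volume a b :=
      fun a b => hf.intervalIntegrable a b
    exact intervalIntegral.continuous_primitive hprim 0
  obtain ⟨m, hm, hFadd⟩ : ∃ m : ℝ, 0 < m ∧ ∀ u, F (u + 1) = F u + m := by
    refine ⟨∫ τ in (0:ℝ)..1, f τ, hfmean, fun u => ?_⟩
    have h1 : ∫ τ in u..(u+1), f τ = ∫ τ in (0:ℝ)..1, f τ := by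
      have := Function.Periodic.intervalIntegral_add_eq (f := f) (T := 1) hfper u 0
      simpa using this
    have h2 := intervalIntegral.integral_add_adjacent_intervals
      (hf.intervalIntegrable (μ := MeasureTheory.volume) 0 u)
      (hf.intervalIntegrable (μ := MeasureTheory.volume) u (u+1))
    rw [hF, hF, ← h2, h1]
  obtain ⟨B, hB0, hB⟩ : ∃ B : ℝ, 0 ≤ B ∧ ∀ u, |F u - m * u| ≤ B := by
    refine bounded_of_periodic (hFc.sub (continuous_const.mul continuous_id)) fun u => ?_
    show F (u + 1) - m * (u + 1) = F u - m * u
    rw [hFadd u]; ring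
  have hFub : ∀ u, F u ≤ m * u + B := fun u => by have := (abs_le.1 (hB u)).2; linarith
  have hFlb : ∀ u, m * u - B ≤ F u := fun u => by have := (abs_le.1 (hB u)).1; linarith
  -- constants controlling L
  have hLc : Continuous (fun q : Evec n × Evec n × ℝ => L q.1 q.2.1 q.2.2) := hLsm.continuous
  obtain ⟨M, hM0, hM⟩ := L_upper_bound hLc hLxper hLtper
  obtain ⟨C₀, hC₀⟩ := hLsuper 0 le_rfl
  obtain ⟨D, hD1, P1, P2⟩ : ∃ D : ℝ, 1 ≤ D ∧ (∀ (x v : Evec n) (τ : ℝ), -D ≤ L x v τ + α) ∧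
      (∀ (x v : Evec n) (τ : ℝ), ‖v‖ ≤ (n:ℝ) → |L x v τ + α| ≤ D) := by
    refine ⟨M + |C₀| + |α| + 1, ?_, ?_, ?_⟩
    · have := abs_nonneg C₀; have := abs_nonneg α; linarith
    · intro x v τ
      have h1 := hC₀ x v τ
      have h2 : -C₀ ≤ L x v τ := by simpa using h1
      have := le_abs_self C₀
      have := neg_abs_le α
      linarith
    · intro x v τ hv
      rw [abs_le]
      constructor
      · have h1 := hC₀ x v τ
        have h2 : -C₀ ≤ L x v τ := by simpa using h1
        have := le_abs_self C₀
        have := neg_abs_le α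
        linarith
      · have h1 := hM x v τ hv
        have := le_abs_self α
        have := abs_nonneg C₀
        linarith
  have hD0 : 0 < D := by linarith
  -- exponential integrability facts
  have EI : ∀ b : ℝ, IntegrableOn (fun τ => rexp (F τ)) (Set.Iic b) :=
    fun b => expF_integrableOn_s10 hFc hm hFub b
  have EB : ∀ b : ℝ, ∫ τ in Set.Iic b, rexp (F τ) ≤ rexp B / m * rexp (m * b) :=
    fun b => expF_integral_le hFc hm hFub b
  obtain ⟨K, hKpos, hKc1, hKc2⟩ : ∃ K : ℝ, 0 < K ∧
      (∀ u : ℝ, 0 < u → D * (rexp B / m) * u ≤ K * u) ∧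
      (∀ u : ℝ, 2 * D * (rexp B / m) * rexp m * u = K * u) := by
    refine ⟨2 * D * (rexp B / m) * rexp m, by positivity, fun u hu => ?_, fun u => rfl⟩
    have hexpm : (1:ℝ) ≤ rexp m := by
      rw [show (1:ℝ) = rexp 0 by simp]
      exact Real.exp_le_exp.2 hm.le
    have h0 : (0:ℝ) ≤ D * (rexp B / m) := by positivity
    have h1 : 0 ≤ D * (rexp B / m) * u := mul_nonneg h0 hu.le
    have h2 := mul_le_mul_of_nonneg_left hexpm h1
    have h3 : (0:ℝ) ≤ D * (rexp B / m) * u * rexp m := by positivity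
    nlinarith
  -- main uniform estimate
  have main : ∀ (s : ℝ) (z x : Evec n) (t : ℝ), s + 1 ≤ t →
      |hAct F L α s t z x - Real.exp (F t) * uWK F L α x t| ≤ K * rexp (m * s) := by
    intro s z x t ht
    have hst : s ≤ t := by linarith
    have hs1 : s ≤ s + 1 := by linarith
    have hts : ¬ t ≤ s := by linarith
    set A : Set ℝ := { r | ∃ γ γ' : ℝ → Evec n, ACOn γ γ' (Set.Icc s t) ∧
        (∃ k : Fin n → ℤ, γ s = z + intVec k) ∧ γ t = x ∧
        IntervalIntegrable (fun τ => Real.exp (F τ) * (L (γ τ) (γ' τ) τ + α))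
          MeasureTheory.volume s t ∧
        r = ∫ τ in s..t, Real.exp (F τ) * (L (γ τ) (γ' τ) τ + α) } with hAdef
    have hhAct : hAct F L α s t z x = sInf A := rfl
    have huWK : uWK F L α x t = sInf (wkSet F L α x t) := rfl
    have hee : rexp (F t) * rexp (-F t) = 1 := by rw [← Real.exp_add]; simp
    -- lower bound for weak-KAM-type integrals over Iic b
    have wk_lower : ∀ (γ γ' : ℝ → Evec n) (b : ℝ),
        IntegrableOn (fun τ => rexp (F τ - F t) * (L (γ τ) (γ' τ) τ + α)) (Set.Iic b) →
        -(D * rexp (-F t) * (rexp B / m * rexp (m * b))) ≤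
          ∫ τ in Set.Iic b, rexp (F τ - F t) * (L (γ τ) (γ' τ) τ + α) := by
      intro γ γ' b hint
      have hlowInt : IntegrableOn (fun τ => (-D * rexp (-F t)) * rexp (F τ)) (Set.Iic b) :=
        (EI b).const_mul _
      have hpt : ∀ τ ∈ Set.Iic b, (-D * rexp (-F t)) * rexp (F τ) ≤
          rexp (F τ - F t) * (L (γ τ) (γ' τ) τ + α) := by
        intro τ _
        have he : rexp (F τ - F t) = rexp (-F t) * rexp (F τ) := by
          rw [← Real.exp_add]; congr 1; ring
        have h2 : rexp (F τ - F t) * (-D) ≤ rexp (F τ - F t) * (L (γ τ) (γ' τ) τ + α) :=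
          mul_le_mul_of_nonneg_left (P1 _ _ _) (Real.exp_pos _).le
        calc (-D * rexp (-F t)) * rexp (F τ) = rexp (F τ - F t) * (-D) := by rw [he]; ring
          _ ≤ _ := h2
      have hmono := setIntegral_mono_on hlowInt hint measurableSet_Iic hpt
      rw [MeasureTheory.integral_const_mul] at hmono
      have hJ := EB b
      have h5 : D * rexp (-F t) * (∫ τ in Set.Iic b, rexp (F τ)) ≤
          D * rexp (-F t) * (rexp B / m * rexp (m * b)) :=
        mul_le_mul_of_nonneg_left hJ (by positivity)
      linarith
    -- continuity and integrability for constant-curve integrands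
    have contConst : ∀ p : Evec n,
        Continuous (fun τ => rexp (F τ - F t) * (L p 0 τ + α)) := by
      intro p
      have h1 : Continuous (fun τ : ℝ => L p 0 τ) := by
        have h0 : Continuous (fun τ : ℝ => ((p, ((0 : Evec n), τ)) : Evec n × Evec n × ℝ)) :=
          continuous_const.prodMk (continuous_const.prodMk continuous_id)
        exact hLc.comp h0
      exact (Real.continuous_exp.comp (hFc.sub continuous_const)).mul (h1.add continuous_const)
    have constInt : ∀ (p : Evec n) (b : ℝ),
        IntegrableOn (fun τ => rexp (F τ - F t) * (L p 0 τ + α)) (Set.Iic b) := by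
      intro p b
      refine Integrable.mono' ((EI b).const_mul (D * rexp (-F t)))
        ((contConst p).aestronglyMeasurable.restrict) (Filter.Eventually.of_forall fun τ => ?_)
      have hnv : ‖(0 : Evec n)‖ ≤ (n:ℝ) := by simp
      have h2 := P2 p 0 τ hnv
      have he : rexp (F τ - F t) = rexp (-F t) * rexp (F τ) := by
        rw [← Real.exp_add]; congr 1; ring
      calc ‖rexp (F τ - F t) * (L p 0 τ + α)‖
          = rexp (F τ - F t) * |L p 0 τ + α| := by
            rw [norm_mul, Real.norm_eq_abs, Real.norm_eq_abs, abs_of_pos (Real.exp_pos _)]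
        _ ≤ rexp (F τ - F t) * D := mul_le_mul_of_nonneg_left h2 (Real.exp_pos _).le
        _ = (D * rexp (-F t)) * rexp (F τ) := by rw [he]; ring
    have constUB : ∀ (p : Evec n) (b : ℝ),
        ∫ τ in Set.Iic b, rexp (F τ - F t) * (L p 0 τ + α) ≤
          D * rexp (-F t) * (rexp B / m * rexp (m * b)) := by
      intro p b
      have hup : IntegrableOn (fun τ => (D * rexp (-F t)) * rexp (F τ)) (Set.Iic b) :=
        (EI b).const_mul _
      have hmono := setIntegral_mono_on (constInt p b) hup measurableSet_Iic (fun τ _ => by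
        have hnv : ‖(0 : Evec n)‖ ≤ (n:ℝ) := by simp
        have h2 := (abs_le.1 (P2 p 0 τ hnv)).2
        have he : rexp (F τ - F t) = rexp (-F t) * rexp (F τ) := by
          rw [← Real.exp_add]; congr 1; ring
        calc rexp (F τ - F t) * (L p 0 τ + α) ≤ rexp (F τ - F t) * D :=
              mul_le_mul_of_nonneg_left h2 (Real.exp_pos _).le
          _ = (D * rexp (-F t)) * rexp (F τ) := by rw [he]; ring)
      rw [MeasureTheory.integral_const_mul] at hmono
      have h5 : D * rexp (-F t) * (∫ τ in Set.Iic b, rexp (F τ)) ≤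
          D * rexp (-F t) * (rexp B / m * rexp (m * b)) :=
        mul_le_mul_of_nonneg_left (EB b) (by positivity)
      linarith
    -- the weak KAM set is nonempty and bounded below
    have hWne : (wkSet F L α x t).Nonempty :=
      ⟨_, ⟨fun _ => x, fun _ => (0 : Evec n), ACOn_const x _, rfl, constInt x t, rfl⟩⟩
    have hWbdd : BddBelow (wkSet F L α x t) := by
      refine ⟨-(D * rexp (-F t) * (rexp B / m * rexp (m * t))), ?_⟩
      rintro r ⟨γ, γ', hACγ, hγt, hint, rfl⟩
      exact wk_lower γ γ' t hint
    -- the finite-horizon set is bounded below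
    have hAbdd : BddBelow A := by
      refine ⟨-(D * (rexp B / m * rexp (m * t))), ?_⟩
      rintro ρ ⟨γ, γ', hACγ, hstart, hend, hint, rfl⟩
      have hlowc : Continuous fun τ : ℝ => (-D) * rexp (F τ) :=
        continuous_const.mul (Real.continuous_exp.comp hFc)
      have h1 : ∫ τ in s..t, (-D) * rexp (F τ) ≤
          ∫ τ in s..t, rexp (F τ) * (L (γ τ) (γ' τ) τ + α) := by
        refine intervalIntegral.integral_mono_on hst (hlowc.intervalIntegrable _ _) hint
          (fun τ _ => ?_)
        have h2 := mul_le_mul_of_nonneg_left (P1 (γ τ) (γ' τ) τ) (Real.exp_pos (F τ)).le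
        calc (-D) * rexp (F τ) = rexp (F τ) * (-D) := by ring
          _ ≤ _ := h2
      have h2 : ∫ τ in s..t, (-D) * rexp (F τ) = (-D) * ∫ τ in s..t, rexp (F τ) :=
        intervalIntegral.integral_const_mul _ _
      have h3 : ∫ τ in s..t, rexp (F τ) ≤ rexp B / m * rexp (m * t) := by
        rw [intervalIntegral.integral_of_le hst]
        calc ∫ τ in Set.Ioc s t, rexp (F τ) ≤ ∫ τ in Set.Iic t, rexp (F τ) :=
              setIntegral_mono_set (EI t)
                (Filter.Eventually.of_forall fun τ => (Real.exp_pos _).le)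
                (Set.Ioc_subset_Iic_self).eventuallyLE
          _ ≤ _ := EB t
        
      have h4 : (-D) * (rexp B / m * rexp (m * t)) ≤ (-D) * ∫ τ in s..t, rexp (F τ) := by
        have := mul_le_mul_of_nonneg_left h3 hD0.le
        linarith
      linarith
    -- Inequality 2 : from infinite-horizon curves to finite-horizon competitors
    have ineq2each : ∀ r ∈ wkSet F L α x t, ∃ ρ ∈ A,
        ρ ≤ rexp (F t) * r + 2 * D * (rexp B / m) * rexp m * rexp (m * s) := by
      rintro r ⟨γ, γ', hACγ, hγt, hint, rfl⟩
      set w : Evec n := γ (s + 1) with hwdef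
      set k : Fin n → ℤ := fun i => ⌊w i - z i⌋ with hkdef
      set p : Evec n := z + intVec k with hpdef
      set d : Evec n := w - p with hddef
      have hpd : p + d = w := by rw [hddef]; abel
      have hdi : ∀ i, d i = Int.fract (w i - z i) := by
        intro i
        simp only [hddef, hpdef, PiLp.sub_apply, PiLp.add_apply, intVec, PiLp.toLp_apply]
        rw [Int.fract]; ring
      have hnd : ‖d‖ ≤ (n:ℝ) := by
        refine norm_le_of_coords01 d fun i => ?_
        rw [hdi i, abs_of_nonneg (Int.fract_nonneg _)]
        exact (Int.fract_lt_one _).le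
      set γh : ℝ → Evec n := fun τ => if τ ≤ s + 1 then p + (τ - s) • d else γ τ with hγh
      set γh' : ℝ → Evec n := fun τ => if τ ≤ s + 1 then d else γ' τ with hγh'
      have hACh : ACOn γh γh' (Set.Icc s t) := by
        refine ACOn.glue (c := s + 1) ⟨hs1, ht⟩ ((ACOn_affine p d s _).mono Set.inter_subset_left)
          (hACγ.mono fun τ hτ => hτ.1.2) ?_
        rw [show s + 1 - s = (1:ℝ) by ring, one_smul, hpd]
      have hγhs : γh s = z + intVec k := by
        simp only [hγh, if_pos hs1]
        rw [show s - s = (0:ℝ) by ring, zero_smul, add_zero]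
      have hγht : γh t = x := by
        by_cases h : t ≤ s + 1
        · have hts1 : t = s + 1 := le_antisymm h ht
          have h0 : γh t = p + (t - s) • d := by
            simp only [hγh]
            rw [if_pos h]
          rw [h0, hts1, show s + 1 - s = (1:ℝ) by ring, one_smul, hpd, hwdef, ← hts1, hγt]
        · simp only [hγh, if_neg h]; exact hγt
      have hcontLine : Continuous (fun τ => rexp (F τ) * (L (p + (τ - s) • d) d τ + α)) := by
        have h1 : Continuous (fun τ : ℝ => p + (τ - s) • d) :=
          continuous_const.add ((continuous_id.sub continuous_const).smul continuous_const)
        have h2 : Continuous (fun τ : ℝ => L (p + (τ - s) • d) d τ) :=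
          hLc.comp (h1.prodMk (continuous_const.prodMk continuous_id))
        exact (Real.continuous_exp.comp hFc).mul (h2.add continuous_const)
      have hi1 : IntervalIntegrable (fun τ => rexp (F τ) * (L (γh τ) (γh' τ) τ + α))
          MeasureTheory.volume s (s + 1) := by
        refine intervalIntegrable_congr_Ioc hs1 (fun τ hτ => ?_)
          (hcontLine.intervalIntegrable _ _)
        simp only [hγh, hγh', if_pos hτ.2]
      have hexp : ∀ τ : ℝ, rexp (F t) * (rexp (F τ - F t)) = rexp (F τ) := by
        intro τ; rw [← Real.exp_add]; congr 1; ring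
      have hIoc2 : IntegrableOn (fun τ => rexp (F t) *
          (rexp (F τ - F t) * (L (γ τ) (γ' τ) τ + α))) (Set.Ioc (s + 1) t) :=
        (hint.mono_set Set.Ioc_subset_Iic_self).const_mul _
      have hi2 : IntervalIntegrable (fun τ => rexp (F τ) * (L (γh τ) (γh' τ) τ + α))
          MeasureTheory.volume (s + 1) t := by
        rw [intervalIntegrable_iff_integrableOn_Ioc_of_le ht]
        refine hIoc2.congr_fun (fun τ hτ => ?_) measurableSet_Ioc
        have h1 : ¬ τ ≤ s + 1 := not_le.2 hτ.1
        simp only [hγh, hγh', if_neg h1]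
        rw [← mul_assoc, hexp τ]
      have hiA := hi1.trans hi2
      refine ⟨∫ τ in s..t, rexp (F τ) * (L (γh τ) (γh' τ) τ + α),
        ⟨γh, γh', hACh, ⟨k, hγhs⟩, hγht, hiA, rfl⟩, ?_⟩
      have hsplit : ∫ τ in s..t, rexp (F τ) * (L (γh τ) (γh' τ) τ + α) =
          (∫ τ in s..(s+1), rexp (F τ) * (L (γh τ) (γh' τ) τ + α)) +
          ∫ τ in (s+1)..t, rexp (F τ) * (L (γh τ) (γh' τ) τ + α) :=
        (intervalIntegral.integral_add_adjacent_intervals hi1 hi2).symm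
      have h5 : rexp (m * (s + 1)) = rexp m * rexp (m * s) := by
        rw [← Real.exp_add]; congr 1; ring
      -- piece 1
      have hb1 : ∫ τ in s..(s+1), rexp (F τ) * (L (γh τ) (γh' τ) τ + α) ≤
          D * (rexp B / m) * rexp m * rexp (m * s) := by
        have he1 : ∫ τ in s..(s+1), rexp (F τ) * (L (γh τ) (γh' τ) τ + α) =
            ∫ τ in s..(s+1), rexp (F τ) * (L (p + (τ - s) • d) d τ + α) := by
          refine intervalIntegral_congr_Ioc hs1 (fun τ hτ => ?_)
          simp only [hγh, hγh', if_pos hτ.2]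
        rw [he1]
        have h2 : ∫ τ in s..(s+1), rexp (F τ) * (L (p + (τ - s) • d) d τ + α) ≤
            ∫ τ in s..(s+1), D * rexp (F τ) := by
          refine intervalIntegral.integral_mono_on hs1 (hcontLine.intervalIntegrable _ _)
            ((continuous_const.mul (Real.continuous_exp.comp hFc) :
              Continuous fun τ : ℝ => D * rexp (F τ)).intervalIntegrable _ _)
            (fun τ _ => ?_)
          have h3 := (abs_le.1 (P2 (p + (τ - s) • d) d τ hnd)).2
          have h4 := mul_le_mul_of_nonneg_left h3 (Real.exp_pos (F τ)).le
          calc rexp (F τ) * (L (p + (τ - s) • d) d τ + α) ≤ rexp (F τ) * D := h4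
            _ = D * rexp (F τ) := by ring
        have h3 : ∫ τ in s..(s+1), D * rexp (F τ) = D * ∫ τ in s..(s+1), rexp (F τ) :=
          intervalIntegral.integral_const_mul _ _
        have h4 : ∫ τ in s..(s+1), rexp (F τ) ≤ rexp B / m * rexp (m * (s+1)) := by
          rw [intervalIntegral.integral_of_le hs1]
          calc ∫ τ in Set.Ioc s (s+1), rexp (F τ) ≤ ∫ τ in Set.Iic (s+1), rexp (F τ) :=
                setIntegral_mono_set (EI (s+1))
                  (Filter.Eventually.of_forall fun τ => (Real.exp_pos _).le)
                  (Set.Ioc_subset_Iic_self).eventuallyLE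
            _ ≤ _ := EB (s+1)
        have h6 := mul_le_mul_of_nonneg_left h4 hD0.le
        calc ∫ τ in s..(s+1), rexp (F τ) * (L (p + (τ - s) • d) d τ + α)
            ≤ D * ∫ τ in s..(s+1), rexp (F τ) := by rw [← h3]; exact h2
          _ ≤ D * (rexp B / m * rexp (m * (s+1))) := h6
          _ = D * (rexp B / m) * rexp m * rexp (m * s) := by rw [h5]; ring
      -- piece 2
      have hb2 : ∫ τ in (s+1)..t, rexp (F τ) * (L (γh τ) (γh' τ) τ + α) ≤
          rexp (F t) * (∫ τ in Set.Iic t, rexp (F τ - F t) * (L (γ τ) (γ' τ) τ + α)) +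
          D * (rexp B / m) * rexp m * rexp (m * s) := by
        have he2 : ∫ τ in (s+1)..t, rexp (F τ) * (L (γh τ) (γh' τ) τ + α) =
            ∫ τ in (s+1)..t, rexp (F t) * (rexp (F τ - F t) * (L (γ τ) (γ' τ) τ + α)) := by
          refine intervalIntegral_congr_Ioc ht (fun τ hτ => ?_)
          have h1 : ¬ τ ≤ s + 1 := not_le.2 hτ.1
          simp only [hγh, hγh', if_neg h1]
          rw [← mul_assoc, hexp τ]
        have hsplitW : ∫ τ in Set.Iic t, rexp (F τ - F t) * (L (γ τ) (γ' τ) τ + α) =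
            (∫ τ in Set.Iic (s+1), rexp (F τ - F t) * (L (γ τ) (γ' τ) τ + α)) +
            ∫ τ in Set.Ioc (s+1) t, rexp (F τ - F t) * (L (γ τ) (γ' τ) τ + α) := by
          rw [← Set.Iic_union_Ioc_eq_Iic ht]
          exact setIntegral_union (Set.Iic_disjoint_Ioc le_rfl) measurableSet_Ioc
            (hint.mono_set (Set.Iic_subset_Iic.2 ht)) (hint.mono_set Set.Ioc_subset_Iic_self)
        have hlow := wk_lower γ γ' (s+1) (hint.mono_set (Set.Iic_subset_Iic.2 ht))
        rw [he2, intervalIntegral.integral_const_mul, intervalIntegral.integral_of_le ht]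
        have h7 : ∫ τ in Set.Ioc (s+1) t, rexp (F τ - F t) * (L (γ τ) (γ' τ) τ + α) =
            (∫ τ in Set.Iic t, rexp (F τ - F t) * (L (γ τ) (γ' τ) τ + α)) -
            ∫ τ in Set.Iic (s+1), rexp (F τ - F t) * (L (γ τ) (γ' τ) τ + α) := by
          rw [hsplitW]; ring
        rw [h7]
        have h8 : rexp (F t) * (D * rexp (-F t) * (rexp B / m * rexp (m * (s+1)))) =
            D * (rexp B / m) * rexp m * rexp (m * s) := by
          rw [h5]
          calc rexp (F t) * (D * rexp (-F t) * (rexp B / m * (rexp m * rexp (m * s))))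
              = (rexp (F t) * rexp (-F t)) * (D * (rexp B / m * (rexp m * rexp (m * s)))) := by
                ring
            _ = D * (rexp B / m) * rexp m * rexp (m * s) := by rw [hee]; ring
        have h9 := mul_le_mul_of_nonneg_left (neg_le_neg hlow) (Real.exp_pos (F t)).le
        rw [neg_neg] at h9
        have h10 : rexp (F t) * ((∫ τ in Set.Iic t, rexp (F τ - F t) * (L (γ τ) (γ' τ) τ + α)) -
            ∫ τ in Set.Iic (s+1), rexp (F τ - F t) * (L (γ τ) (γ' τ) τ + α)) =
            rexp (F t) * (∫ τ in Set.Iic t, rexp (F τ - F t) * (L (γ τ) (γ' τ) τ + α)) +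
            rexp (F t) * (-(∫ τ in Set.Iic (s+1), rexp (F τ - F t) * (L (γ τ) (γ' τ) τ + α))) := by
          ring
        rw [h10]
        linarith [h9, h8.ge, h8.le]
      linarith [hsplit, hb1, hb2]
    have hAne : A.Nonempty := by
      obtain ⟨r, hr⟩ := hWne
      obtain ⟨ρ, hρ, -⟩ := ineq2each r hr
      exact ⟨ρ, hρ⟩
    have ineq2 : hAct F L α s t z x ≤ rexp (F t) * uWK F L α x t +
        2 * D * (rexp B / m) * rexp m * rexp (m * s) := by
      rw [hhAct, huWK]
      have h : ∀ r ∈ wkSet F L α x t, sInf A ≤ rexp (F t) * r +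
          2 * D * (rexp B / m) * rexp m * rexp (m * s) := by
        intro r hr
        obtain ⟨ρ, hρ, hle⟩ := ineq2each r hr
        exact (csInf_le hAbdd hρ).trans hle
      have h2 : (sInf A - 2 * D * (rexp B / m) * rexp m * rexp (m * s)) / rexp (F t) ≤
          sInf (wkSet F L α x t) := by
        refine le_csInf hWne fun r hr => ?_
        rw [div_le_iff₀ (Real.exp_pos _)]
        have := h r hr
        nlinarith [this]
      rw [div_le_iff₀ (Real.exp_pos _)] at h2
      nlinarith [h2]
    -- Inequality 1 : from finite-horizon curves to infinite-horizon competitors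
    have ineq1each : ∀ ρ ∈ A, uWK F L α x t ≤ rexp (-F t) * ρ +
        D * rexp (-F t) * (rexp B / m * rexp (m * s)) := by
      rintro ρ ⟨γ, γ', hACγ, ⟨k, hγs⟩, hγt, hint, rfl⟩
      set γc : ℝ → Evec n := fun τ => if τ ≤ s then γ s else γ τ with hγc
      set γc' : ℝ → Evec n := fun τ => if τ ≤ s then (0 : Evec n) else γ' τ with hγc'
      have hACc : ACOn γc γc' (Set.Iic t) := by
        refine ACOn.glue (c := s) (Set.mem_Iic.2 hst)
          ((ACOn_const (γ s) _).mono Set.inter_subset_left)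
          (hACγ.mono fun τ hτ => ⟨hτ.2, hτ.1⟩) rfl
      have hend : γc t = x := by simp only [hγc, if_neg hts]; exact hγt
      have hint1 : IntegrableOn (fun τ => rexp (F τ - F t) * (L (γc τ) (γc' τ) τ + α))
          (Set.Iic s) := by
        refine (constInt (γ s) s).congr_fun (fun τ hτ => ?_) measurableSet_Iic
        simp only [hγc, hγc', if_pos (Set.mem_Iic.1 hτ)]
      have hint2 : IntegrableOn (fun τ => rexp (F τ - F t) * (L (γc τ) (γc' τ) τ + α))
          (Set.Ioc s t) := by
        have h0 : IntegrableOn (fun τ => rexp (F τ) * (L (γ τ) (γ' τ) τ + α)) (Set.Ioc s t) :=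
          (intervalIntegrable_iff_integrableOn_Ioc_of_le hst).1 hint
        refine MeasureTheory.IntegrableOn.congr_fun (h0.const_mul (rexp (-F t)))
          (fun τ hτ => ?_) measurableSet_Ioc
        have h2 : ¬ τ ≤ s := not_le.2 hτ.1
        simp only [hγc, hγc', if_neg h2]
        have he : rexp (F τ - F t) = rexp (-F t) * rexp (F τ) := by
          rw [← Real.exp_add]; congr 1; ring
        rw [he]; ring
      have hintt : IntegrableOn (fun τ => rexp (F τ - F t) * (L (γc τ) (γc' τ) τ + α))
          (Set.Iic t) := by
        have h0 := hint1.union hint2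
        rwa [Set.Iic_union_Ioc_eq_Iic hst] at h0
      have hmem : (∫ τ in Set.Iic t, rexp (F τ - F t) * (L (γc τ) (γc' τ) τ + α)) ∈
          wkSet F L α x t := ⟨γc, γc', hACc, hend, hintt, rfl⟩
      have h1 : uWK F L α x t ≤ ∫ τ in Set.Iic t, rexp (F τ - F t) * (L (γc τ) (γc' τ) τ + α) := by
        rw [huWK]; exact csInf_le hWbdd hmem
      have hsplit : ∫ τ in Set.Iic t, rexp (F τ - F t) * (L (γc τ) (γc' τ) τ + α) =
          (∫ τ in Set.Iic s, rexp (F τ - F t) * (L (γc τ) (γc' τ) τ + α)) +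
          ∫ τ in Set.Ioc s t, rexp (F τ - F t) * (L (γc τ) (γc' τ) τ + α) := by
        rw [← Set.Iic_union_Ioc_eq_Iic hst]
        exact setIntegral_union (Set.Iic_disjoint_Ioc le_rfl) measurableSet_Ioc hint1 hint2
      have h2 : ∫ τ in Set.Iic s, rexp (F τ - F t) * (L (γc τ) (γc' τ) τ + α) =
          ∫ τ in Set.Iic s, rexp (F τ - F t) * (L (γ s) 0 τ + α) := by
        refine setIntegral_congr_fun measurableSet_Iic (fun τ hτ => ?_)
        simp only [hγc, hγc', if_pos (Set.mem_Iic.1 hτ)]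
      have h3 := constUB (γ s) s
      have h4 : ∫ τ in Set.Ioc s t, rexp (F τ - F t) * (L (γc τ) (γc' τ) τ + α) =
          rexp (-F t) * ∫ τ in s..t, rexp (F τ) * (L (γ τ) (γ' τ) τ + α) := by
        have h5 : ∫ τ in Set.Ioc s t, rexp (F τ - F t) * (L (γc τ) (γc' τ) τ + α) =
            ∫ τ in Set.Ioc s t, rexp (-F t) * (rexp (F τ) * (L (γ τ) (γ' τ) τ + α)) := by
          refine setIntegral_congr_fun measurableSet_Ioc (fun τ hτ => ?_)
          have h6 : ¬ τ ≤ s := not_le.2 hτ.1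
          simp only [hγc, hγc', if_neg h6]
          have he : rexp (F τ - F t) = rexp (-F t) * rexp (F τ) := by
            rw [← Real.exp_add]; congr 1; ring
          rw [he]; ring
        rw [h5, MeasureTheory.integral_const_mul, intervalIntegral.integral_of_le hst]
      linarith [hsplit, h2.le, h2.ge, h3, h4.le, h4.ge, h1]
    have ineq1 : rexp (F t) * uWK F L α x t ≤ hAct F L α s t z x +
        D * (rexp B / m) * rexp (m * s) := by
      rw [hhAct]
      have h : rexp (F t) * uWK F L α x t - D * (rexp B / m) * rexp (m * s) ≤ sInf A := by
        refine le_csInf hAne fun ρ hρ => ?_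
        have h5 := mul_le_mul_of_nonneg_left (ineq1each ρ hρ) (Real.exp_pos (F t)).le
        have h6 : rexp (F t) * (rexp (-F t) * ρ +
            D * rexp (-F t) * (rexp B / m * rexp (m * s))) =
            (rexp (F t) * rexp (-F t)) * ρ +
            D * (rexp (F t) * rexp (-F t)) * (rexp B / m * rexp (m * s)) := by ring
        rw [h6, hee] at h5
        have h7 : (1:ℝ) * ρ + D * 1 * (rexp B / m * rexp (m * s)) =
            ρ + D * (rexp B / m) * rexp (m * s) := by ring
        rw [h7] at h5
        linarith
      linarith
    -- final assembly
    rw [abs_le]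
    constructor
    · have hc1 : D * (rexp B / m) * rexp (m * s) ≤ K * rexp (m * s) :=
        hKc1 _ (Real.exp_pos _)
      linarith [ineq1]
    · have hc2 : 2 * D * (rexp B / m) * rexp m * rexp (m * s) = K * rexp (m * s) :=
        hKc2 _
      linarith [ineq2]
  -- choice of S
  refine ⟨Real.log (ε / K) / m, fun s hs z x t ht => ?_⟩
  refine (main s z x t ht).trans ?_
  have h1 : m * s ≤ Real.log (ε / K) := by
    have h2 : m * s ≤ m * (Real.log (ε / K) / m) :=
      mul_le_mul_of_nonneg_left hs hm.le
    rwa [mul_div_cancel₀ _ hm.ne'] at h2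
  have h3 : rexp (m * s) ≤ ε / K := by
    calc rexp (m * s) ≤ rexp (Real.log (ε / K)) := exp_le_exp.2 h1
      _ = ε / K := Real.exp_log (by positivity)
  calc K * rexp (m * s) ≤ K * (ε / K) := mul_le_mul_of_nonneg_left h3 hKpos.le
    _ = ε := by field_simp
end
end
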